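/- arXiv:1003.1691 — 2 statements merged into one kernel-verified Lean document; each statement's English description precedes it below -/
import Mathlib

section
/- Let α = (α_1,…,α_n) be a composition, let Δ_α be the 180-degree rotation of the fat staircase partition δ_α = (n^{α_n},…,1^{α_1}), let λ, μ be partitions and k ≥ 0 with λ_1 − μ_1 − k ≤ n, and let S(λ,μ,α;k) be the skew diagram obtained by placing λ/μ immediately below Δ_α so that the rows overlap in exactly λ_1 − μ_1 − k columns. If T is a semistandard Young tableau of shape S(λ,μ,α;k) with lattice reading word, then the entries in the first row of the foundation λ/μ all lie in the set R_{α,k} = {1 + Σ_{i=1}^{j} α_{n+1−i} : j = 1,…,n} ∪ ({1} if k > 0, else ∅); moreover the value 1 occurs at most k times in that row, and every other value occurs at most once. -/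
open Finset

/-- A diagram is a finite set of cells `(row, column)`. -/
abbrev Diagram := Finset (ℕ × ℕ)

def ht (D : Diagram) : ℕ := D.sup (fun c => c.1 + 1)
def wd (D : Diagram) : ℕ := D.sup (fun c => c.2 + 1)

/-- A semistandard Young tableau of shape `D` (entries are 0-based: the paper's
value `v` corresponds to the entry `v - 1`). -/
structure SSYT (D : Diagram) where
  entry : ℕ × ℕ → ℕ
  rowWeak : ∀ i j, (i, j) ∈ D → (i, j + 1) ∈ D → entry (i, j) ≤ entry (i, j + 1)
  colStrict : ∀ i j, (i, j) ∈ D → (i + 1, j) ∈ D → entry (i, j) < entry (i + 1, j)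
  zero_outside : ∀ c, c ∉ D → entry c = 0

/-- The content of a tableau: `content T v` is the number of cells with entry `v`. -/
noncomputable def content {D : Diagram} (T : SSYT D) : ℕ →₀ ℕ := ∑ c ∈ D, Finsupp.single (T.entry c) 1

/-- `c'` is read before (or equal to) `c` in the reading word:
rows top to bottom, each row right to left. -/
def ReadBefore (c' c : ℕ × ℕ) : Prop := c'.1 < c.1 ∨ (c'.1 = c.1 ∧ c.2 ≤ c'.2)

instance (c' c : ℕ × ℕ) : Decidable (ReadBefore c' c) := by
  unfold ReadBefore; infer_instance

/-- The reading word of `T` is lattice. -/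
def IsLattice {D : Diagram} (T : SSYT D) : Prop :=
  ∀ c ∈ D, ∀ v : ℕ,
    (D.filter (fun c' => ReadBefore c' c ∧ T.entry c' = v + 1)).card ≤
    (D.filter (fun c' => ReadBefore c' c ∧ T.entry c' = v)).card

/-- The skew Schur function of a diagram, as a power series in `x_0, x_1, …`:
the coefficient of the monomial with exponents `d` is the number of SSYT of
shape `D` and content `d`. -/
noncomputable def schurOf (D : Diagram) : MvPowerSeries ℕ ℤ :=
  fun d => (Nat.card {T : SSYT D // content T = d} : ℤ)

/-- Number of lattice SSYT of shape `D` and content `d`. -/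
noncomputable def lrCount (D : Diagram) (d : ℕ →₀ ℕ) : ℕ :=
  Nat.card {T : SSYT D // IsLattice T ∧ content T = d}

/-- Littlewood–Richardson coefficient `c^lam_{mu, d}` (Littlewood–Richardson rule). -/
noncomputable def lrCoeff (lam mu : YoungDiagram) (d : ℕ →₀ ℕ) : ℕ :=
  lrCount (lam.cells \ mu.cells) d

def diagramOfRows (L : List ℕ) : Diagram :=
  (Finset.range L.length).biUnion (fun i => (Finset.range (L.getD i 0)).image (fun j => (i, j)))

/-- The row lengths of the fat staircase `δ_α`. -/
def staircaseRows (α : List ℕ) : List ℕ :=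
  ((List.range α.length).reverse.map (fun i => List.replicate (α.getD i 0) (i + 1))).flatten

/-- The fat staircase `δ_α = (n^{α_n}, …, 1^{α_1})` for `α = (α_1, …, α_n)`. -/
def fatStaircase (α : List ℕ) : Diagram := diagramOfRows (staircaseRows α)

/-- 180 degree rotation of a diagram. -/
def rotD (D : Diagram) : Diagram :=
  D.image (fun c => (ht D - 1 - c.1, wd D - 1 - c.2))

/-- The sequence of row lengths of a diagram, as a finitely supported function. -/
noncomputable def rowContent (D : Diagram) : ℕ →₀ ℕ := ∑ c ∈ D, Finsupp.single c.1 1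

/-- A content (partition) `d` is a fat staircase. -/
def IsFatStaircase (d : ℕ →₀ ℕ) : Prop :=
  ∃ α : List ℕ, (∀ a ∈ α, 0 < a) ∧ d = rowContent (fatStaircase α)

/-- Every Schur function appearing in the expansion of `s_D` is indexed by a fat staircase. -/
def IsSumOfFatStaircases (D : Diagram) : Prop :=
  ∀ d, lrCount D d ≠ 0 → IsFatStaircase d

/-- Near-concatenation of depth `i`. -/
def nearConcat (i : ℕ) (D1 D2 : Diagram) : Diagram :=
  D1.image (fun c => (c.1 + (ht D2 - i), c.2)) ∪ D2.image (fun c => (c.1, c.2 + wd D1))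

/-- Direct sum of diagrams. -/
def directSum (D1 D2 : Diagram) : Diagram := nearConcat 0 D1 D2

/-- A single column of `l` boxes. -/
def colD (l : ℕ) : Diagram := (Finset.range l).image (fun i => (i, 0))

/-- A single row of `m` boxes. -/
def rowD (m : ℕ) : Diagram := (Finset.range m).image (fun j => (0, j))

def colLenAt (D : Diagram) (j : ℕ) : ℕ := (D.filter (fun c => c.2 = j)).card
noncomputable def leftCol (D : Diagram) : ℕ := sInf {j | ∃ i, (i, j) ∈ D}
noncomputable def blCol (D : Diagram) : ℕ := sInf {j | (ht D - 1, j) ∈ D}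
noncomputable def topRow (D : Diagram) : ℕ := sInf {i | ∃ j, (i, j) ∈ D}
noncomputable def tlCol (D : Diagram) : ℕ := sInf {j | (topRow D, j) ∈ D}
def lastRowLen (D : Diagram) : ℕ := (D.filter (fun c => c.1 = ht D - 1)).card

/-- `S(F, E; k)`: the foundation `F` is placed immediately below `E`, with the
first row of `F` beginning one box below and `k` boxes left of the bottom-left
box of `E`. -/
noncomputable def SDiagG (F E : Diagram) (k : ℕ) : Diagram :=
  E.image (fun c => (c.1, c.2 + tlCol F + k)) ∪
  F.image (fun c => (c.1 + ht E, c.2 + blCol E))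

/-- `S(λ, μ, E; k)` with foundation the skew diagram `λ/μ`. -/
noncomputable def SDiag (lam mu : YoungDiagram) (E : Diagram) (k : ℕ) : Diagram :=
  SDiagG (lam.cells \ mu.cells) E k

/-- The set `R_{α,k}` (values as in the paper, i.e. 1-based). -/
def Rset (α : List ℕ) (k : ℕ) : Set ℕ :=
  {v | ∃ j, 1 ≤ j ∧ j ≤ α.length ∧ v = 1 + (α.drop (α.length - j)).sum} ∪
  {v | v = 1 ∧ 0 < k}

def rectD (a b : ℕ) : Diagram := Finset.range a ×ˢ Finset.range b

/-- The complement `D^c` of `D` in the `a × b` rectangle: the 180 degree rotation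
of the set-theoretic complement of `D` in the rectangle. -/
def complD (a b : ℕ) (D : Diagram) : Diagram :=
  (rectD a b \ D).image (fun c => (a - 1 - c.1, b - 1 - c.2))

def IsSkewDiagram (D : Diagram) : Prop :=
  ∃ lam mu : YoungDiagram, mu ≤ lam ∧ D = lam.cells \ mu.cells

def diagramOfF (d : ℕ →₀ ℕ) : Diagram :=
  d.support.biUnion (fun i => (Finset.range (d i)).image (fun j => (i, j)))

/-- A symmetric function is Schur-positive when it is a nonnegative integer
combination of Schur functions of partitions. -/
def SchurPositive (f : MvPowerSeries ℕ ℤ) : Prop :=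
  ∃ (S : Finset (ℕ →₀ ℕ)) (a : (ℕ →₀ ℕ) → ℕ),
    (∀ d ∈ S, ∀ i, d (i + 1) ≤ d i) ∧
    f = ∑ d ∈ S, (a d : ℤ) • schurOf (diagramOfF d)

def AdjCell (c c' : ℕ × ℕ) : Prop :=
  (c.1 = c'.1 ∧ (c.2 + 1 = c'.2 ∨ c'.2 + 1 = c.2)) ∨
  (c.2 = c'.2 ∧ (c.1 + 1 = c'.1 ∨ c'.1 + 1 = c.1))

def ConnectedDiagram (D : Diagram) : Prop :=
  ∀ c ∈ D, ∀ c' ∈ D, Relation.ReflTransGen (fun a b => a ∈ D ∧ b ∈ D ∧ AdjCell a b) c c'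

namespace FS

lemma sum_drop_anti (l : List ℕ) {i j : ℕ} (h : i ≤ j) : (l.drop j).sum ≤ (l.drop i).sum := by
  have hd : l.drop j = (l.drop i).drop (j - i) := by rw [List.drop_drop]; congr 1; omega
  rw [hd]
  exact List.Sublist.sum_le_sum (List.drop_sublist _ _) (fun a _ => Nat.zero_le a)

lemma sum_drop_lt (l : List ℕ) {i : ℕ} (hi : i < l.length) (hpos : ∀ a ∈ l, 0 < a) :
    (l.drop (i+1)).sum < (l.drop i).sum := by
  rw [List.drop_eq_getElem_cons hi, List.sum_cons]
  have := hpos l[i] (List.getElem_mem hi)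
  omega

lemma mem_diagramOfRows {L : List ℕ} {i j : ℕ} :
    (i, j) ∈ diagramOfRows L ↔ i < L.length ∧ j < L.getD i 0 := by
  simp only [diagramOfRows, Finset.mem_biUnion, Finset.mem_range, Finset.mem_image,
    Prod.mk.injEq]
  constructor
  · rintro ⟨i', hi', j', hj', rfl, rfl⟩; exact ⟨hi', hj'⟩
  · rintro ⟨h1, h2⟩; exact ⟨i, h1, j, h2, rfl, rfl⟩

lemma staircaseRows_cons (a : ℕ) (α : List ℕ) :
    staircaseRows (a :: α) = (staircaseRows α).map (· + 1) ++ List.replicate a 1 := by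
  unfold staircaseRows
  rw [List.length_cons, List.range_succ_eq_map, List.reverse_cons, List.map_append,
    List.flatten_append]
  congr 1
  · rw [← List.map_reverse, List.map_map, List.map_flatten, List.map_map]
    congr 1
    apply List.map_congr_left
    intro i _
    simp [Function.comp, List.map_replicate]
  · simp

lemma length_staircaseRows (α : List ℕ) : (staircaseRows α).length = α.sum := by
  induction α with
  | nil => rfl
  | cons a α ih => rw [staircaseRows_cons]; simp [ih, Nat.add_comm]

lemma getD_aux (L : List ℕ) (a i : ℕ) :
    ((L.map (· + 1) ++ List.replicate a 1).getD i 0) =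
      if i < L.length then L.getD i 0 + 1 else if i < L.length + a then 1 else 0 := by
  simp only [List.getD_eq_getElem?_getD, List.getElem?_append, List.getElem?_map,
    List.length_map, List.getElem?_replicate]
  split
  · rename_i h
    rw [List.getElem?_eq_getElem h]
    simp [List.getElem?_eq_getElem h]
  · rename_i h
    split <;> rename_i h2
    · rw [if_pos (by omega)]; rfl
    · rw [if_neg (by omega)]; rfl

lemma mem_fatStaircase {α : List ℕ} {i j : ℕ} :
    (i, j) ∈ fatStaircase α ↔ i < (α.drop j).sum := by
  induction α generalizing j with
  | nil => simp [fatStaircase, mem_diagramOfRows, staircaseRows]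
  | cons a α ih =>
    rw [fatStaircase, mem_diagramOfRows, length_staircaseRows, staircaseRows_cons, getD_aux,
      length_staircaseRows, List.sum_cons]
    have hih : i < (staircaseRows α).length ∧ j - 1 < (staircaseRows α).getD i 0 ↔
        i < (α.drop (j-1)).sum := by
      rw [← mem_diagramOfRows (L := staircaseRows α)]; exact ih
    rw [length_staircaseRows] at hih
    have hle : (α.drop (j-1)).sum ≤ α.sum := sum_drop_anti α (Nat.zero_le _)
    rcases j with _ | j
    · simp only [List.drop_zero, List.sum_cons]
      split <;> rename_i h
      · simp only [Nat.zero_sub, List.drop_zero] at hih; omega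
      · split <;> rename_i h2 <;> simp <;> omega
    · rw [List.drop_succ_cons]
      have hih' : (i < α.sum ∧ j < (staircaseRows α).getD i 0) ↔ i < (α.drop j).sum := by
        simpa using hih
      split <;> rename_i h
      · constructor
        · rintro ⟨-, hj⟩; exact hih'.1 ⟨h, Nat.lt_of_succ_lt_succ hj⟩
        · intro hj; have h2 := hih'.2 hj; omega
      · have hnd : ¬ i < (α.drop j).sum := fun hc => h (hih'.2 hc).1
        split <;>
        · constructor
          · rintro ⟨-, hj⟩; omega
          · intro hc; exact absurd hc hnd

end FS
-- appended fragment (context: defs above + FS namespace lemmas)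
namespace FS

variable {α : List ℕ}

lemma sum_pos (hα : ∀ a ∈ α, 0 < a) (hne : α ≠ []) : 0 < α.sum := by
  rcases α with _ | ⟨a, t⟩
  · exact absurd rfl hne
  · have := hα a (by simp); simp [List.sum_cons]; omega

lemma drop_sum_pos (hα : ∀ a ∈ α, 0 < a) {m : ℕ} (hm : m < α.length) :
    0 < (α.drop m).sum :=
  lt_of_le_of_lt (Nat.zero_le _) (sum_drop_lt α hm hα)

lemma col_lt_length {i j : ℕ} (h : i < (α.drop j).sum) : j < α.length := by
  by_contra hc
  rw [List.drop_eq_nil_of_le (by omega)] at h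
  simp at h

lemma ht_fat (hα : ∀ a ∈ α, 0 < a) (hne : α ≠ []) : ht (fatStaircase α) = α.sum := by
  apply le_antisymm
  · apply Finset.sup_le
    rintro ⟨i, j⟩ hc
    rw [mem_fatStaircase] at hc
    have := sum_drop_anti α (Nat.zero_le j)
    simp only [List.drop_zero] at this
    simp; omega
  · have hm : ((α.sum - 1 : ℕ), (0:ℕ)) ∈ fatStaircase α := by
      rw [mem_fatStaircase]; simp [Nat.sub_lt (sum_pos hα hne)]
    have h2 : α.sum - 1 + 1 ≤ ht (fatStaircase α) :=
      Finset.le_sup (f := fun c : ℕ × ℕ => c.1 + 1) hm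
    have hp := sum_pos hα hne
    omega

lemma wd_fat (hα : ∀ a ∈ α, 0 < a) (hne : α ≠ []) : wd (fatStaircase α) = α.length := by
  apply le_antisymm
  · apply Finset.sup_le
    rintro ⟨i, j⟩ hc
    rw [mem_fatStaircase] at hc
    have := col_lt_length hc
    simp; omega
  · have hn : 0 < α.length := List.length_pos_iff.mpr hne
    have hm : ((0:ℕ), (α.length - 1 : ℕ)) ∈ fatStaircase α := by
      rw [mem_fatStaircase]; exact drop_sum_pos hα (by omega)
    have h2 : α.length - 1 + 1 ≤ wd (fatStaircase α) :=
      Finset.le_sup (f := fun c : ℕ × ℕ => c.2 + 1) hm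
    omega

lemma mem_rotFat (hα : ∀ a ∈ α, 0 < a) (hne : α ≠ []) {r j : ℕ} :
    (r, j) ∈ rotD (fatStaircase α) ↔
      r < α.sum ∧ j < α.length ∧ α.sum - r ≤ (α.drop (α.length - 1 - j)).sum := by
  have hN := sum_pos hα hne
  have hn : 0 < α.length := List.length_pos_iff.mpr hne
  rw [rotD, ht_fat hα hne, wd_fat hα hne]
  simp only [Finset.mem_image, Prod.mk.injEq]
  constructor
  · rintro ⟨⟨i, j'⟩, hc, h1, h2⟩
    rw [mem_fatStaircase] at hc
    have hj' : j' < α.length := col_lt_length hc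
    have hiN : i < α.sum := by
      have := sum_drop_anti α (Nat.zero_le j')
      simp only [List.drop_zero] at this; omega
    simp only at h1 h2
    subst h1; subst h2
    refine ⟨by omega, by omega, ?_⟩
    have : α.length - 1 - (α.length - 1 - j') = j' := by omega
    rw [this]
    omega
  · rintro ⟨hr, hj, hS⟩
    refine ⟨(α.sum - 1 - r, α.length - 1 - j), ?_, by simp; omega, by simp; omega⟩
    rw [mem_fatStaircase]
    omega

lemma ht_rotFat (hα : ∀ a ∈ α, 0 < a) (hne : α ≠ []) : ht (rotD (fatStaircase α)) = α.sum := by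
  have hN := sum_pos hα hne
  have hn : 0 < α.length := List.length_pos_iff.mpr hne
  apply le_antisymm
  · apply Finset.sup_le
    rintro ⟨r, j⟩ hc
    rw [mem_rotFat hα hne] at hc
    simp; omega
  · have hm : ((α.sum - 1 : ℕ), (α.length - 1 : ℕ)) ∈ rotD (fatStaircase α) := by
      rw [mem_rotFat hα hne]
      refine ⟨by omega, by omega, ?_⟩
      have h0 : α.length - 1 - (α.length - 1) = 0 := by omega
      rw [h0]
      simp only [List.drop_zero]
      omega
    have h2 : α.sum - 1 + 1 ≤ ht (rotD (fatStaircase α)) :=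
      Finset.le_sup (f := fun c : ℕ × ℕ => c.1 + 1) hm
    omega

lemma wd_rotFat (hα : ∀ a ∈ α, 0 < a) (hne : α ≠ []) : wd (rotD (fatStaircase α)) = α.length := by
  have hN := sum_pos hα hne
  have hn : 0 < α.length := List.length_pos_iff.mpr hne
  apply le_antisymm
  · apply Finset.sup_le
    rintro ⟨r, j⟩ hc
    rw [mem_rotFat hα hne] at hc
    simp; omega
  · have hm : ((α.sum - 1 : ℕ), (α.length - 1 : ℕ)) ∈ rotD (fatStaircase α) := by
      rw [mem_rotFat hα hne]
      refine ⟨by omega, by omega, ?_⟩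
      have h0 : α.length - 1 - (α.length - 1) = 0 := by omega
      rw [h0]; simp only [List.drop_zero]; omega
    have h2 : α.length - 1 + 1 ≤ wd (rotD (fatStaircase α)) :=
      Finset.le_sup (f := fun c : ℕ × ℕ => c.2 + 1) hm
    omega

lemma blCol_rotFat (hα : ∀ a ∈ α, 0 < a) (hne : α ≠ []) : blCol (rotD (fatStaircase α)) = 0 := by
  have hN := sum_pos hα hne
  have hn : 0 < α.length := List.length_pos_iff.mpr hne
  rw [blCol, Nat.sInf_eq_zero]
  left
  rw [Set.mem_setOf_eq, ht_rotFat hα hne, mem_rotFat hα hne]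
  simp only [Nat.sub_zero]
  refine ⟨by omega, by omega, ?_⟩
  have := drop_sum_pos hα (m := α.length - 1) (by omega)
  omega

noncomputable def colS (α : List ℕ) (col : ℕ) : ℕ := (α.drop (α.length - 1 - col)).sum

lemma colS_le_sum (α : List ℕ) (col : ℕ) : colS α col ≤ α.sum := by
  have := sum_drop_anti α (Nat.zero_le (α.length - 1 - col))
  simpa [colS] using this

lemma colS_strictMono (hα : ∀ a ∈ α, 0 < a) {c1 c2 : ℕ} (h : c1 < c2) (h2 : c2 < α.length) :
    colS α c1 < colS α c2 := by
  unfold colS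
  have h3 : α.length - 1 - c2 < α.length := by omega
  exact lt_of_le_of_lt (sum_drop_anti α (by omega)) (sum_drop_lt α h3 hα)

lemma colS_pos (hα : ∀ a ∈ α, 0 < a) {col : ℕ} (hcol : col < α.length) : 0 < colS α col :=
  drop_sum_pos hα (by omega)

variable {lam mu : YoungDiagram} {k : ℕ}

lemma mem_F {i j : ℕ} :
    (i, j) ∈ lam.cells \ mu.cells ↔ mu.rowLen i ≤ j ∧ j < lam.rowLen i := by
  rw [Finset.mem_sdiff, YoungDiagram.mem_cells, YoungDiagram.mem_cells,
    YoungDiagram.mem_iff_lt_rowLen, YoungDiagram.mem_iff_lt_rowLen]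
  omega

lemma topRow_F (h0 : mu.rowLen 0 < lam.rowLen 0) : topRow (lam.cells \ mu.cells) = 0 := by
  rw [topRow, Nat.sInf_eq_zero]
  left
  exact ⟨mu.rowLen 0, mem_F.mpr ⟨le_rfl, h0⟩⟩

lemma tlCol_F (h0 : mu.rowLen 0 < lam.rowLen 0) :
    tlCol (lam.cells \ mu.cells) = mu.rowLen 0 := by
  rw [tlCol, topRow_F h0]
  apply le_antisymm
  · exact Nat.sInf_le (mem_F.mpr ⟨le_rfl, h0⟩)
  · apply le_csInf ⟨mu.rowLen 0, mem_F.mpr ⟨le_rfl, h0⟩⟩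
    rintro j hj
    exact (mem_F.mp hj).1

lemma mem_D_rowN (hα : ∀ a ∈ α, 0 < a) (hne : α ≠ []) {j : ℕ} :
    (α.sum, j) ∈ SDiag lam mu (rotD (fatStaircase α)) k ↔
      mu.rowLen 0 ≤ j ∧ j < lam.rowLen 0 := by
  rw [SDiag, SDiagG, Finset.mem_union, ht_rotFat hα hne, blCol_rotFat hα hne]
  constructor
  · rintro (h | h) <;> obtain ⟨⟨r', j'⟩, hc, hce⟩ := Finset.mem_image.mp h
    · exfalso
      rw [mem_rotFat hα hne] at hc
      have : r' = α.sum := (Prod.mk.injEq _ _ _ _ ▸ hce).1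
      omega
    · simp only [Prod.mk.injEq] at hce
      have hr0 : r' = 0 := by omega
      subst hr0
      rw [mem_F] at hc
      omega
  · rintro ⟨h1, h2⟩
    right
    exact Finset.mem_image.mpr ⟨(0, j), mem_F.mpr ⟨h1, h2⟩, by simp⟩

lemma mem_D_rowlt (hα : ∀ a ∈ α, 0 < a) (hne : α ≠ [])
    (h0 : mu.rowLen 0 < lam.rowLen 0) {r j : ℕ} (hr : r < α.sum) :
    (r, j) ∈ SDiag lam mu (rotD (fatStaircase α)) k ↔
      mu.rowLen 0 + k ≤ j ∧ j - (mu.rowLen 0 + k) < α.length ∧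
        α.sum - r ≤ colS α (j - (mu.rowLen 0 + k)) := by
  rw [SDiag, SDiagG, Finset.mem_union, ht_rotFat hα hne, blCol_rotFat hα hne, tlCol_F h0]
  constructor
  · rintro (h | h) <;> obtain ⟨⟨r', j'⟩, hc, hce⟩ := Finset.mem_image.mp h
    · simp only [Prod.mk.injEq] at hce
      obtain ⟨h1, h2⟩ := hce
      rw [mem_rotFat hα hne] at hc
      subst h1
      have hj : j' = j - (mu.rowLen 0 + k) := by omega
      subst hj
      refine ⟨by omega, by omega, ?_⟩
      exact hc.2.2
    · exfalso
      simp only [Prod.mk.injEq] at hce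
      omega
  · rintro ⟨h1, h2, h3⟩
    left
    refine Finset.mem_image.mpr ⟨(r, j - (mu.rowLen 0 + k)), ?_, by simp; omega⟩
    rw [mem_rotFat hα hne]
    exact ⟨hr, h2, h3⟩

lemma colS_mono (α : List ℕ) {c1 c2 : ℕ} (h : c1 ≤ c2) : colS α c1 ≤ colS α c2 :=
  sum_drop_anti α (by omega)

lemma row_entry_mono {D : Diagram} (T : SSYT D) {r j1 j2 : ℕ} (h12 : j1 ≤ j2)
    (hcont : ∀ j', j1 ≤ j' → j' ≤ j2 → (r, j') ∈ D) :
    T.entry (r, j1) ≤ T.entry (r, j2) := by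
  induction j2, h12 using Nat.le_induction with
  | base => exact le_rfl
  | succ j2 h12 ih =>
    have h1 := ih (fun j' hj' hj2 => hcont j' hj' (by omega))
    exact h1.trans (T.rowWeak r j2 (hcont j2 h12 (by omega)) (hcont (j2+1) (by omega) le_rfl))

lemma delta_forced (hα : ∀ a ∈ α, 0 < a) (hne : α ≠ [])
    (h0 : mu.rowLen 0 < lam.rowLen 0)
    (T : SSYT (SDiag lam mu (rotD (fatStaircase α)) k)) (hT : IsLattice T) :
    ∀ r j, (r, j) ∈ SDiag lam mu (rotD (fatStaircase α)) k → r < α.sum →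
      T.entry (r, j) + (α.sum - r) = colS α (j - (mu.rowLen 0 + k)) := by
  have hSle : ∀ col, colS α col ≤ α.sum := fun col => colS_le_sum α col
  suffices H : ∀ m r j, r * (mu.rowLen 0 + k + α.length + 1) + (mu.rowLen 0 + k + α.length - j) ≤ m →
      (r, j) ∈ SDiag lam mu (rotD (fatStaircase α)) k → r < α.sum →
      T.entry (r, j) + (α.sum - r) = colS α (j - (mu.rowLen 0 + k)) by
    intro r j h1 h2; exact H _ r j le_rfl h1 h2
  intro m
  induction m using Nat.strong_induction_on with
  | _ m IH =>
  intro r j hm hmem hr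
  obtain ⟨hj1, hj2, hj3⟩ := (mem_D_rowlt hα hne h0 hr).mp hmem
  have hjW : j < mu.rowLen 0 + k + α.length := by omega
  -- IH in convenient form
  have IHC : ∀ r' j', (r', j') ∈ SDiag lam mu (rotD (fatStaircase α)) k → r' < α.sum →
      (r' < r ∨ (r' = r ∧ j < j')) →
      T.entry (r', j') + (α.sum - r') = colS α (j' - (mu.rowLen 0 + k)) := by
    intro r' j' h1 h2 h3
    obtain ⟨ha, hb, hc⟩ := (mem_D_rowlt hα hne h0 h2).mp h1
    refine IH (r' * (mu.rowLen 0 + k + α.length + 1) + (mu.rowLen 0 + k + α.length - j')) ?_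
      r' j' le_rfl h1 h2
    rcases h3 with h | ⟨h, h'⟩
    · have h4 : (r' + 1) * (mu.rowLen 0 + k + α.length + 1) ≤ r * (mu.rowLen 0 + k + α.length + 1) :=
        Nat.mul_le_mul_right _ (by omega)
      have h5 : r' * (mu.rowLen 0 + k + α.length + 1) + (mu.rowLen 0 + k + α.length + 1)
          = (r' + 1) * (mu.rowLen 0 + k + α.length + 1) := (Nat.succ_mul r' _).symm
      omega
    · subst h; omega
  -- row contiguity on row r
  have hrowcont : ∀ j2, (r, j2) ∈ SDiag lam mu (rotD (fatStaircase α)) k →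
      ∀ j', j ≤ j' → j' ≤ j2 → (r, j') ∈ SDiag lam mu (rotD (fatStaircase α)) k := by
    intro j2 hj2m j' h1 h2
    obtain ⟨ha, hb, hc⟩ := (mem_D_rowlt hα hne h0 hr).mp hj2m
    rw [mem_D_rowlt hα hne h0 hr]
    refine ⟨by omega, by omega, ?_⟩
    exact le_trans hj3 (colS_mono α (by omega))
  -- the pattern cells
  have hpatD : ∀ v col, col < α.length → v < colS α col →
      (α.sum - colS α col + v, mu.rowLen 0 + k + col) ∈ SDiag lam mu (rotD (fatStaircase α)) k := by
    intro v col h1 h2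
    have hS := hSle col
    rw [mem_D_rowlt hα hne h0 (by omega)]
    refine ⟨by omega, by omega, ?_⟩
    have hcc : mu.rowLen 0 + k + col - (mu.rowLen 0 + k) = col := by omega
    rw [hcc]; omega
  have hpatE : ∀ v col, col < α.length → v < colS α col →
      (α.sum - colS α col + v < r ∨ (α.sum - colS α col + v = r ∧ j < mu.rowLen 0 + k + col)) →
      T.entry (α.sum - colS α col + v, mu.rowLen 0 + k + col) = v := by
    intro v col h1 h2 h3
    have hS := hSle col
    have hmem' := hpatD v col h1 h2
    have hforce := IHC _ _ hmem' (by omega) h3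
    have hcc : mu.rowLen 0 + k + col - (mu.rowLen 0 + k) = col := by omega
    rw [hcc] at hforce
    omega
  -- counting sets
  have hcount : ∀ v, (SDiag lam mu (rotD (fatStaircase α)) k).filter
        (fun c' => ReadBefore c' (r, j) ∧ c' ≠ (r, j) ∧ T.entry c' = v)
      = ((Finset.range α.length).filter (fun col => v < colS α col ∧
          (α.sum - colS α col + v < r ∨ (α.sum - colS α col + v = r ∧ j < mu.rowLen 0 + k + col)))).image
        (fun col => (α.sum - colS α col + v, mu.rowLen 0 + k + col)) := by
    intro v
    ext ⟨r', j'⟩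
    simp only [Finset.mem_filter]
    simp only [Finset.mem_filter, Finset.mem_image, Finset.mem_range, ReadBefore,
      Prod.mk.injEq, ne_eq]
    constructor
    · rintro ⟨hmem', hrb, hneq, hent⟩
      have hr' : r' < α.sum := by rcases hrb with h | ⟨h, h'⟩ <;> omega
      obtain ⟨h1', h2', h3'⟩ := (mem_D_rowlt hα hne h0 hr').mp hmem'
      have hord : r' < r ∨ (r' = r ∧ j < j') := by
        rcases hrb with h | ⟨h, h'⟩
        · exact Or.inl h
        · right
          refine ⟨h, ?_⟩
          rcases Nat.lt_or_ge j j' with h2 | h2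
          · exact h2
          · exfalso; exact hneq ⟨h, by omega⟩
      have hforce := IHC r' j' hmem' hr' hord
      have hS' := hSle (j' - (mu.rowLen 0 + k))
      refine ⟨j' - (mu.rowLen 0 + k), ⟨h2', by omega, ?_⟩, by omega, by omega⟩
      rcases hord with h | ⟨h, h'⟩
      · left; omega
      · right; constructor <;> omega
    · rintro ⟨col, ⟨hcoln, hva, hrb'⟩, heq1, heq2⟩
      have hS := hSle col
      have hmem' := hpatD v col hcoln hva
      have hent := hpatE v col hcoln hva hrb'
      rw [heq1, heq2] at hmem' hent
      refine ⟨hmem', ?_, ?_, hent⟩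
      · rcases hrb' with h | ⟨h, h'⟩
        · left; omega
        · right; constructor <;> omega
      · intro hC
        rcases hrb' with h | ⟨h, h'⟩ <;> omega
  have hinj : ∀ v (s : Finset ℕ),
      (s.image (fun col => (α.sum - colS α col + v, mu.rowLen 0 + k + col))).card = s.card := by
    intro v s
    apply Finset.card_image_of_injOn
    intro a _ b _ hab
    rw [Prod.mk.injEq] at hab
    omega
  have hS0le := hSle (j - (mu.rowLen 0 + k))
  -- Step A : lower bound
  have hlow : colS α (j - (mu.rowLen 0 + k)) ≤ T.entry (r, j) + (α.sum - r) := by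
    rcases Nat.lt_or_ge (α.sum - r) (colS α (j - (mu.rowLen 0 + k))) with h | h
    · have hr1 : 1 ≤ r := by omega
      have habove : (r - 1, j) ∈ SDiag lam mu (rotD (fatStaircase α)) k := by
        rw [mem_D_rowlt hα hne h0 (by omega)]
        exact ⟨hj1, hj2, by omega⟩
      have hfa := IHC (r-1) j habove (by omega) (Or.inl (by omega))
      have hcs : T.entry (r - 1, j) < T.entry (r - 1 + 1, j) :=
        T.colStrict (r-1) j habove (by rw [Nat.sub_add_cancel hr1]; exact hmem)
      rw [Nat.sub_add_cancel hr1] at hcs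
      omega
    · omega
  -- Step B : upper bound, by contradiction
  by_contra hcon
  have hegt : colS α (j - (mu.rowLen 0 + k)) < T.entry (r, j) + (α.sum - r) := by omega
  have he1 : 1 ≤ T.entry (r, j) := by omega
  obtain ⟨e', hee⟩ : ∃ e', T.entry (r, j) = e' + 1 := ⟨T.entry (r, j) - 1, by omega⟩
  have hlat := hT (r, j) hmem e'
  -- LHS lower bound
  have hLHS : ((Finset.range α.length).filter (fun col => e' + 1 < colS α col ∧
          (α.sum - colS α col + (e' + 1) < r ∨
            (α.sum - colS α col + (e' + 1) = r ∧ j < mu.rowLen 0 + k + col)))).card + 1 ≤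
      ((SDiag lam mu (rotD (fatStaircase α)) k).filter
        (fun c' => ReadBefore c' (r, j) ∧ T.entry c' = e' + 1)).card := by
    have hsub : insert (r, j) ((SDiag lam mu (rotD (fatStaircase α)) k).filter
        (fun c' => ReadBefore c' (r, j) ∧ c' ≠ (r, j) ∧ T.entry c' = e' + 1)) ⊆
        (SDiag lam mu (rotD (fatStaircase α)) k).filter
          (fun c' => ReadBefore c' (r, j) ∧ T.entry c' = e' + 1) := by
      intro c' hc'
      rcases Finset.mem_insert.mp hc' with h | h
      · subst h
        exact Finset.mem_filter.mpr ⟨hmem, Or.inr ⟨rfl, le_rfl⟩, hee⟩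
      · obtain ⟨h1, h2, h3, h4⟩ := Finset.mem_filter.mp h
        exact Finset.mem_filter.mpr ⟨h1, h2, h4⟩
    have hnotmem : (r, j) ∉ (SDiag lam mu (rotD (fatStaircase α)) k).filter
        (fun c' => ReadBefore c' (r, j) ∧ c' ≠ (r, j) ∧ T.entry c' = e' + 1) := by
      intro hC
      exact (Finset.mem_filter.mp hC).2.2.1 rfl
    have hcc := Finset.card_le_card hsub
    rw [Finset.card_insert_of_notMem hnotmem, hcount (e'+1), hinj (e'+1)] at hcc
    omega
  -- RHS equality
  have hRHS : ((SDiag lam mu (rotD (fatStaircase α)) k).filter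
        (fun c' => ReadBefore c' (r, j) ∧ T.entry c' = e')).card
      = ((Finset.range α.length).filter (fun col => e' < colS α col ∧
          (α.sum - colS α col + e' < r ∨
            (α.sum - colS α col + e' = r ∧ j < mu.rowLen 0 + k + col)))).card := by
    have heq : (SDiag lam mu (rotD (fatStaircase α)) k).filter
          (fun c' => ReadBefore c' (r, j) ∧ T.entry c' = e')
        = (SDiag lam mu (rotD (fatStaircase α)) k).filter
          (fun c' => ReadBefore c' (r, j) ∧ c' ≠ (r, j) ∧ T.entry c' = e') := by
      apply Finset.filter_congr
      intro c' hc'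
      constructor
      · rintro ⟨h1, h2⟩
        refine ⟨h1, ?_, h2⟩
        rintro rfl
        rw [hee] at h2
        omega
      · rintro ⟨h1, h2, h3⟩
        exact ⟨h1, h3⟩
    rw [heq, hcount e', hinj e']
  -- inclusion of index sets
  have hAsub : ((Finset.range α.length).filter (fun col => e' < colS α col ∧
          (α.sum - colS α col + e' < r ∨
            (α.sum - colS α col + e' = r ∧ j < mu.rowLen 0 + k + col)))) ⊆
      ((Finset.range α.length).filter (fun col => e' + 1 < colS α col ∧
          (α.sum - colS α col + (e' + 1) < r ∨
            (α.sum - colS α col + (e' + 1) = r ∧ j < mu.rowLen 0 + k + col)))) := by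
    intro col hcol
    obtain ⟨hcoln, hva, hrb'⟩ := Finset.mem_filter.mp hcol
    rw [Finset.mem_range] at hcoln
    have hS := hSle col
    rcases hrb' with h | ⟨h, h'⟩
    · rcases Nat.lt_or_ge (α.sum - colS α col + (e' + 1)) r with h2 | h2
      · exact Finset.mem_filter.mpr ⟨Finset.mem_range.mpr hcoln, by omega, Or.inl h2⟩
      · have hrow : α.sum - colS α col + (e' + 1) = r := by omega
        have hcolgt : j < mu.rowLen 0 + k + col := by
          by_contra hC
          have h3 : colS α col ≤ colS α (j - (mu.rowLen 0 + k)) := colS_mono α (by omega)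
          omega
        exact Finset.mem_filter.mpr ⟨Finset.mem_range.mpr hcoln, by omega,
          Or.inr ⟨hrow, hcolgt⟩⟩
    · exfalso
      have hmem' := hpatD e' col hcoln hva
      rw [h] at hmem'
      have hmono := row_entry_mono T (le_of_lt h') (hrowcont (mu.rowLen 0 + k + col) hmem')
      have hent := hpatE e' col hcoln hva (Or.inr ⟨h, h'⟩)
      rw [h] at hent
      rw [hent, hee] at hmono
      omega
  have hcard := Finset.card_le_card hAsub
  omega

lemma patD (hα : ∀ a ∈ α, 0 < a) (hne : α ≠ []) (h0 : mu.rowLen 0 < lam.rowLen 0)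
    {v col : ℕ} (h1 : col < α.length) (h2 : v < colS α col) :
    (α.sum - colS α col + v, mu.rowLen 0 + k + col) ∈ SDiag lam mu (rotD (fatStaircase α)) k := by
  have hS := colS_le_sum α col
  rw [mem_D_rowlt hα hne h0 (by omega)]
  refine ⟨by omega, by omega, ?_⟩
  have hcc : mu.rowLen 0 + k + col - (mu.rowLen 0 + k) = col := by omega
  rw [hcc]; omega

lemma countN (hα : ∀ a ∈ α, 0 < a) (hne : α ≠ []) (h0 : mu.rowLen 0 < lam.rowLen 0)
    (T : SSYT (SDiag lam mu (rotD (fatStaircase α)) k)) (hT : IsLattice T) (j v : ℕ) :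
    ((SDiag lam mu (rotD (fatStaircase α)) k).filter
        (fun c' => ReadBefore c' (α.sum, j) ∧ c'.1 < α.sum ∧ T.entry c' = v)).card
      = ((Finset.range α.length).filter (fun col => v < colS α col)).card := by
  have hforce := delta_forced hα hne h0 T hT
  have hSle : ∀ col, colS α col ≤ α.sum := fun col => colS_le_sum α col
  have heq : (SDiag lam mu (rotD (fatStaircase α)) k).filter
        (fun c' => ReadBefore c' (α.sum, j) ∧ c'.1 < α.sum ∧ T.entry c' = v)
      = ((Finset.range α.length).filter (fun col => v < colS α col)).image
        (fun col => (α.sum - colS α col + v, mu.rowLen 0 + k + col)) := by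
    ext ⟨r', j'⟩
    simp only [Finset.mem_filter]
    simp only [Finset.mem_filter, Finset.mem_image, Finset.mem_range, ReadBefore,
      Prod.mk.injEq]
    constructor
    · rintro ⟨hmem', hrb, hr', hent⟩
      obtain ⟨h1', h2', h3'⟩ := (mem_D_rowlt hα hne h0 hr').mp hmem'
      have hf := hforce r' j' hmem' hr'
      have hS' := hSle (j' - (mu.rowLen 0 + k))
      exact ⟨j' - (mu.rowLen 0 + k), ⟨h2', by omega⟩, by omega, by omega⟩
    · rintro ⟨col, ⟨hcoln, hva⟩, heq1, heq2⟩
      have hS := hSle col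
      have hmem' := patD (k := k) hα hne h0 hcoln hva
      have hf := hforce _ _ hmem' (by omega)
      have hcc : mu.rowLen 0 + k + col - (mu.rowLen 0 + k) = col := by omega
      rw [hcc] at hf
      rw [heq1, heq2] at hmem' hf
      exact ⟨hmem', Or.inl (by omega), by omega, by omega⟩
  rw [heq]
  apply Finset.card_image_of_injOn
  intro a _ b _ hab
  rw [Prod.mk.injEq] at hab
  omega

lemma C_step (v : ℕ) :
    ((Finset.range α.length).filter (fun col => v < colS α col)).card ≤
      ((Finset.range α.length).filter (fun col => v + 1 < colS α col)).card +
      ((Finset.range α.length).filter (fun col => colS α col = v + 1)).card := by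
  have hsub : (Finset.range α.length).filter (fun col => v < colS α col) ⊆
      ((Finset.range α.length).filter (fun col => v + 1 < colS α col)) ∪
      ((Finset.range α.length).filter (fun col => colS α col = v + 1)) := by
    intro col hcol
    simp only [Finset.mem_union, Finset.mem_filter, Finset.mem_range] at hcol ⊢
    omega
  exact le_trans (Finset.card_le_card hsub) (Finset.card_union_le _ _)

lemma Ceq_card (hα : ∀ a ∈ α, 0 < a) (w : ℕ) :
    ((Finset.range α.length).filter (fun col => colS α col = w)).card ≤ 1 := by
  apply Finset.card_le_one.mpr
  intro a ha b hb
  obtain ⟨ha1, ha2⟩ := Finset.mem_filter.mp ha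
  obtain ⟨hb1, hb2⟩ := Finset.mem_filter.mp hb
  rw [Finset.mem_range] at ha1 hb1
  by_contra hab
  rcases Nat.lt_or_ge a b with h | h
  · have := colS_strictMono hα h hb1; omega
  · have := colS_strictMono hα (by omega : b < a) ha1; omega

lemma Ceq_nonempty_mem_Rset (hα : ∀ a ∈ α, 0 < a) {w : ℕ}
    (h : 0 < ((Finset.range α.length).filter (fun col => colS α col = w)).card) :
    w + 1 ∈ Rset α k := by
  obtain ⟨col, hcol⟩ := Finset.card_pos.mp h
  obtain ⟨h1, h2⟩ := Finset.mem_filter.mp hcol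
  rw [Finset.mem_range] at h1
  apply Set.mem_union_left
  refine ⟨col + 1, by omega, by omega, ?_⟩
  have hcc : α.length - (col + 1) = α.length - 1 - col := by omega
  have hdef : (α.drop (α.length - 1 - col)).sum = colS α col := rfl
  rw [hcc, hdef, h2]
  omega

end FS


/-- in a lattice SSYT of shape `S(λ, μ, α^◁; k)`, the entries of the
first row of the foundation take values in `R_{α,k}` (entries here are 0-based,
so the paper's value is `entry + 1`); the value 1 (entry 0) occurs at most `k`
times and every other value at most once. -/
theorem firstRow_foundation_mem_Rset (α : List ℕ) (hα : ∀ a ∈ α, 0 < a) (hne : α ≠ [])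
    (lam mu : YoungDiagram) (hsub : mu ≤ lam) (k : ℕ)
    (hk : lam.rowLen 0 - mu.rowLen 0 - k ≤ α.length)
    (T : SSYT (SDiag lam mu (rotD (fatStaircase α)) k)) (hT : IsLattice T) :
    (∀ c ∈ SDiag lam mu (rotD (fatStaircase α)) k, c.1 = α.sum →
        T.entry c + 1 ∈ Rset α k) ∧
    ((SDiag lam mu (rotD (fatStaircase α)) k).filter
        (fun c => c.1 = α.sum ∧ T.entry c = 0)).card ≤ k ∧
    (∀ v : ℕ, 0 < v →
      ((SDiag lam mu (rotD (fatStaircase α)) k).filter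
        (fun c => c.1 = α.sum ∧ T.entry c = v)).card ≤ 1) := by
  classical
  have hN := FS.sum_pos hα hne
  have hn : 0 < α.length := List.length_pos_iff.mpr hne
  by_cases h0 : mu.rowLen 0 < lam.rowLen 0
  · -- main case
    have hforce := FS.delta_forced hα hne h0 T hT
    -- zero entries on row N are confined to the k leftmost columns
    have hzlt : ∀ j2, (α.sum, j2) ∈ SDiag lam mu (rotD (fatStaircase α)) k →
        T.entry (α.sum, j2) = 0 → j2 < mu.rowLen 0 + k := by
      intro j2 hmem hent
      obtain ⟨hm1, hm2⟩ := (FS.mem_D_rowN hα hne).mp hmem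
      by_contra hC
      have habove : (α.sum - 1, j2) ∈ SDiag lam mu (rotD (fatStaircase α)) k := by
        rw [FS.mem_D_rowlt hα hne h0 (by omega)]
        refine ⟨by omega, by omega, ?_⟩
        have := FS.colS_pos hα (col := j2 - (mu.rowLen 0 + k)) (by omega)
        omega
      have hcs := T.colStrict (α.sum - 1) j2 habove
        (by rw [Nat.sub_add_cancel (by omega : 1 ≤ α.sum)]; exact hmem)
      rw [Nat.sub_add_cancel (by omega : 1 ≤ α.sum), hent] at hcs
      omega
    -- RHS equality for the lattice condition at a row-N cell
    have RHSeq : ∀ j e', (α.sum, j) ∈ SDiag lam mu (rotD (fatStaircase α)) k →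
        T.entry (α.sum, j) = e' + 1 →
        ((SDiag lam mu (rotD (fatStaircase α)) k).filter
            (fun c' => ReadBefore c' (α.sum, j) ∧ T.entry c' = e')).card
          = ((Finset.range α.length).filter (fun col => e' < FS.colS α col)).card := by
      intro j e' hmem hent
      obtain ⟨hm1, hm2⟩ := (FS.mem_D_rowN hα hne).mp hmem
      have heq : (SDiag lam mu (rotD (fatStaircase α)) k).filter
            (fun c' => ReadBefore c' (α.sum, j) ∧ T.entry c' = e')
          = (SDiag lam mu (rotD (fatStaircase α)) k).filter
            (fun c' => ReadBefore c' (α.sum, j) ∧ c'.1 < α.sum ∧ T.entry c' = e') := by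
        ext ⟨r', j'⟩
        simp only [Finset.mem_filter]
        simp only [Finset.mem_filter, ReadBefore]
        constructor
        · rintro ⟨h1, h2, h3⟩
          refine ⟨h1, h2, ?_, h3⟩
          rcases h2 with h | ⟨h, h'⟩
          · exact h
          · exfalso
            subst h
            obtain ⟨hn1, hn2⟩ := (FS.mem_D_rowN hα hne).mp h1
            have hmono := FS.row_entry_mono T h' (fun x hx1 hx2 => by
              rw [FS.mem_D_rowN hα hne]; omega)
            rw [h3, hent] at hmono
            omega
        · rintro ⟨h1, h2, h3, h4⟩
          exact ⟨h1, h2, h4⟩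
      rw [heq, FS.countN hα hne h0 T hT j e']
    -- LHS lower bound, with an optional second row-N cell
    have LHSge : ∀ j e', (α.sum, j) ∈ SDiag lam mu (rotD (fatStaircase α)) k →
        T.entry (α.sum, j) = e' + 1 →
        ((Finset.range α.length).filter (fun col => e' + 1 < FS.colS α col)).card + 1 ≤
        ((SDiag lam mu (rotD (fatStaircase α)) k).filter
            (fun c' => ReadBefore c' (α.sum, j) ∧ T.entry c' = e' + 1)).card := by
      intro j e' hmem hent
      have hsubs : insert (α.sum, j) ((SDiag lam mu (rotD (fatStaircase α)) k).filter
          (fun c' => ReadBefore c' (α.sum, j) ∧ c'.1 < α.sum ∧ T.entry c' = e' + 1)) ⊆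
          (SDiag lam mu (rotD (fatStaircase α)) k).filter
            (fun c' => ReadBefore c' (α.sum, j) ∧ T.entry c' = e' + 1) := by
        intro c' hc'
        rcases Finset.mem_insert.mp hc' with h | h
        · subst h
          refine Finset.mem_filter.mpr ⟨hmem, Or.inr ⟨rfl, le_rfl⟩, hent⟩
        · obtain ⟨h1, h2, h3, h4⟩ := Finset.mem_filter.mp h
          exact Finset.mem_filter.mpr ⟨h1, h2, h4⟩
      have hnm : (α.sum, j) ∉ (SDiag lam mu (rotD (fatStaircase α)) k).filter
          (fun c' => ReadBefore c' (α.sum, j) ∧ c'.1 < α.sum ∧ T.entry c' = e' + 1) := by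
        intro hC
        have := (Finset.mem_filter.mp hC).2.2.1
        omega
      have hcc := Finset.card_le_card hsubs
      rw [Finset.card_insert_of_notMem hnm, FS.countN hα hne h0 T hT j (e'+1)] at hcc
      exact hcc
    -- the key consequence of the lattice property at a row-N cell with entry e'+1
    have key : ∀ j e', (α.sum, j) ∈ SDiag lam mu (rotD (fatStaircase α)) k →
        T.entry (α.sum, j) = e' + 1 →
        ((Finset.range α.length).filter (fun col => e' + 1 < FS.colS α col)).card + 1 ≤
        ((Finset.range α.length).filter (fun col => e' < FS.colS α col)).card := by
      intro j e' hmem hent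
      have hlat := hT (α.sum, j) hmem e'
      have h1 := LHSge j e' hmem hent
      have h2 := RHSeq j e' hmem hent
      omega
    refine ⟨?_, ?_, ?_⟩
    · -- membership in Rset
      rintro ⟨c1, c2⟩ hc hc1
      simp only at hc1
      subst hc1
      rcases hent : T.entry (α.sum, c2) with _ | e'
      · -- entry 0
        have hlt := hzlt c2 hc hent
        obtain ⟨hm1, hm2⟩ := (FS.mem_D_rowN hα hne).mp hc
        apply Set.mem_union_right
        exact ⟨by omega, by omega⟩
      · -- entry e' + 1
        have hkey := key c2 e' hc hent
        have hstep := FS.C_step (α := α) e'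
        have hce : 0 < ((Finset.range α.length).filter
            (fun col => FS.colS α col = e' + 1)).card := by omega
        have := FS.Ceq_nonempty_mem_Rset (k := k) hα hce
        simpa using this
    · -- at most k zeros
      have hmap : ∀ c ∈ (SDiag lam mu (rotD (fatStaircase α)) k).filter
          (fun c => c.1 = α.sum ∧ T.entry c = 0),
          c.2 ∈ Finset.Ico (mu.rowLen 0) (mu.rowLen 0 + k) := by
        rintro ⟨c1, c2⟩ hc
        obtain ⟨hmem, hc1, hent⟩ := Finset.mem_filter.mp hc
        simp only at hc1 hent
        subst hc1
        obtain ⟨hm1, hm2⟩ := (FS.mem_D_rowN hα hne).mp hmem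
        have := hzlt c2 hmem hent
        rw [Finset.mem_Ico]
        omega
      have hinj : Set.InjOn (fun c : ℕ × ℕ => c.2)
          ((SDiag lam mu (rotD (fatStaircase α)) k).filter
            (fun c => c.1 = α.sum ∧ T.entry c = 0)) := by
        rintro ⟨a1, a2⟩ ha ⟨b1, b2⟩ hb hab
        simp only [Finset.coe_filter, Set.mem_setOf_eq] at ha hb
        simp only at hab
        subst hab
        rw [Prod.mk.injEq]
        exact ⟨by omega, rfl⟩
      have := Finset.card_le_card_of_injOn _ hmap hinj
      rwa [Nat.card_Ico, Nat.add_sub_cancel_left] at this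
    · -- multiplicity at most one for positive values
      intro v hv
      have hpair : ∀ j1 j2, j1 < j2 →
          (α.sum, j1) ∈ SDiag lam mu (rotD (fatStaircase α)) k →
          (α.sum, j2) ∈ SDiag lam mu (rotD (fatStaircase α)) k →
          T.entry (α.sum, j1) = v → T.entry (α.sum, j2) = v → False := by
        intro j1 j2 h12 hmem1 hmem2 hent1 hent2
        have hent1' : T.entry (α.sum, j1) = (v - 1) + 1 := by omega
        have hent2' : T.entry (α.sum, j2) = (v - 1) + 1 := by omega
        have hlat := hT (α.sum, j1) hmem1 (v - 1)
        have h2 := RHSeq j1 (v-1) hmem1 hent1'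
        -- LHS with two extra cells
        have hsubs : insert (α.sum, j1) (insert (α.sum, j2)
            ((SDiag lam mu (rotD (fatStaircase α)) k).filter
              (fun c' => ReadBefore c' (α.sum, j1) ∧ c'.1 < α.sum ∧ T.entry c' = (v-1) + 1))) ⊆
            (SDiag lam mu (rotD (fatStaircase α)) k).filter
              (fun c' => ReadBefore c' (α.sum, j1) ∧ T.entry c' = (v-1) + 1) := by
          intro c' hc'
          rcases Finset.mem_insert.mp hc' with h | h
          · subst h
            exact Finset.mem_filter.mpr ⟨hmem1, Or.inr ⟨rfl, le_rfl⟩, hent1'⟩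
          rcases Finset.mem_insert.mp h with h | h
          · subst h
            exact Finset.mem_filter.mpr ⟨hmem2, Or.inr ⟨rfl, by omega⟩, hent2'⟩
          · obtain ⟨ha, hb, hc, hd⟩ := Finset.mem_filter.mp h
            exact Finset.mem_filter.mpr ⟨ha, hb, hd⟩
        have hnm2 : (α.sum, j2) ∉ (SDiag lam mu (rotD (fatStaircase α)) k).filter
            (fun c' => ReadBefore c' (α.sum, j1) ∧ c'.1 < α.sum ∧ T.entry c' = (v-1) + 1) := by
          intro hC
          have := (Finset.mem_filter.mp hC).2.2.1
          omega
        have hnm1 : (α.sum, j1) ∉ insert (α.sum, j2)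
            ((SDiag lam mu (rotD (fatStaircase α)) k).filter
              (fun c' => ReadBefore c' (α.sum, j1) ∧ c'.1 < α.sum ∧ T.entry c' = (v-1) + 1)) := by
          intro hC
          rcases Finset.mem_insert.mp hC with h | h
          · rw [Prod.mk.injEq] at h
            omega
          · have := (Finset.mem_filter.mp h).2.2.1
            omega
        have hcc := Finset.card_le_card hsubs
        rw [Finset.card_insert_of_notMem hnm1, Finset.card_insert_of_notMem hnm2,
          FS.countN hα hne h0 T hT j1 ((v-1)+1)] at hcc
        have hstep := FS.C_step (α := α) (v - 1)
        have hceq := FS.Ceq_card (α := α) hα ((v-1) + 1)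
        omega
      apply Finset.card_le_one.mpr
      rintro ⟨a1, a2⟩ ha ⟨b1, b2⟩ hb
      obtain ⟨hamem, ha1, ha2⟩ := Finset.mem_filter.mp ha
      obtain ⟨hbmem, hb1, hb2⟩ := Finset.mem_filter.mp hb
      simp only at ha1 ha2 hb1 hb2
      subst ha1; subst hb1
      rcases Nat.lt_trichotomy a2 b2 with h | h | h
      · exact absurd (hpair a2 b2 h hamem hbmem ha2 hb2) not_false
      · rw [h]
      · exact absurd (hpair b2 a2 h hbmem hamem hb2 ha2) not_false
  · -- degenerate case : the first row of the foundation is empty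
    have hempty : ∀ jj : ℕ, (α.sum, jj) ∉ SDiag lam mu (rotD (fatStaircase α)) k := by
      intro jj hC
      have := (FS.mem_D_rowN hα hne).mp hC
      omega
    refine ⟨?_, ?_, ?_⟩
    · rintro ⟨c1, c2⟩ hc hc1
      simp only at hc1
      subst hc1
      exact absurd hc (hempty c2)
    · have h1 : (SDiag lam mu (rotD (fatStaircase α)) k).filter
          (fun c => c.1 = α.sum ∧ T.entry c = 0) = ∅ := by
        apply Finset.filter_eq_empty_iff.mpr
        rintro ⟨c1, c2⟩ hc ⟨hc1, hc2⟩
        simp only at hc1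
        subst hc1
        exact hempty c2 hc
      rw [h1]
      simp
    · intro v hv
      have h1 : (SDiag lam mu (rotD (fatStaircase α)) k).filter
          (fun c => c.1 = α.sum ∧ T.entry c = v) = ∅ := by
        apply Finset.filter_eq_empty_iff.mpr
        rintro ⟨c1, c2⟩ hc ⟨hc1, hc2⟩
        simp only at hc1
        subst hc1
        exact hempty c2 hc
      rw [h1]
      simp
end

section
/- Let c be a single column and D a skew diagram which is not a sum of fat staircases. Then neither D ⊙_i c nor c ⊙_i D (the near-concatenations of depth i of D with the column c, whenever defined) is a sum of fat staircases. -/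
open Finset

open Finset

-- ReadBefore basics
lemma rb_refl (c : ℕ × ℕ) : ReadBefore c c := Or.inr ⟨rfl, le_rfl⟩

lemma rb_trans {a b c : ℕ × ℕ} (h1 : ReadBefore a b) (h2 : ReadBefore b c) : ReadBefore a c := by
  unfold ReadBefore at *; omega

lemma rb_mono_row {a b x : ℕ} {c : ℕ × ℕ} (hab : a ≤ b) (h : ReadBefore (b, x) c) :
    ReadBefore (a, x) c := by
  unfold ReadBefore at *; simp at *; omega

lemma rb_shift_row {a b : ℕ × ℕ} (t : ℕ) (h : ReadBefore a b) :
    ReadBefore (a.1 + t, a.2) (b.1 + t, b.2) := by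
  unfold ReadBefore at *; simp at *; omega

lemma rb_shift_col {a b : ℕ × ℕ} (w : ℕ) (h : ReadBefore a b) :
    ReadBefore (a.1, a.2 + w) (b.1, b.2 + w) := by
  unfold ReadBefore at *; simp at *; omega

-- sums of singles
lemma sum_single_apply {β : Type*} (S : Finset β) (f : β → ℕ) (u : ℕ) :
    (∑ c ∈ S, Finsupp.single (f c) (1 : ℕ)) u = (S.filter (fun c => f c = u)).card := by
  classical
  rw [Finset.sum_apply', Finset.card_filter]
  exact Finset.sum_congr rfl (fun c _ => Finsupp.single_apply)

lemma content_apply {D : Diagram} (T : SSYT D) (u : ℕ) :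
    content T u = (D.filter (fun c => T.entry c = u)).card :=
  sum_single_apply D T.entry u

-- basic diagram bounds
lemma lt_ht {D : Diagram} {c : ℕ × ℕ} (h : c ∈ D) : c.1 < ht D :=
  Finset.le_sup (f := fun c => c.1 + 1) h

lemma lt_wd {D : Diagram} {c : ℕ × ℕ} (h : c ∈ D) : c.2 < wd D :=
  Finset.le_sup (f := fun c => c.2 + 1) h

-- the reading order key
lemma key_le_rb {W : ℕ} {c' c'' : ℕ × ℕ} (h1 : c'.2 < W) (h2 : c''.2 < W)
    (h : c'.1 * W + (W - 1 - c'.2) ≤ c''.1 * W + (W - 1 - c''.2)) : ReadBefore c' c'' := by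
  rcases lt_trichotomy c'.1 c''.1 with hlt | heq | hgt
  · exact Or.inl hlt
  · refine Or.inr ⟨heq, ?_⟩
    rw [heq] at h
    omega
  · exfalso
    have h3 : (c''.1 + 1) * W ≤ c'.1 * W := Nat.mul_le_mul_right W hgt
    rw [add_one_mul] at h3
    set X := c'.1 * W
    set Y := c''.1 * W
    omega

/-- Key prefix lemma: lattice inequalities hold over any reading-downward-closed subset. -/
lemma lattice_prefix {D : Diagram} (T : SSYT D) (hT : IsLattice T) (P : ℕ × ℕ → Prop)
    [DecidablePred P]
    (hP : ∀ c' ∈ D, ∀ c'' ∈ D, P c'' → ReadBefore c' c'' → P c') (v : ℕ) :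
    (D.filter fun c' => P c' ∧ T.entry c' = v + 1).card ≤
    (D.filter fun c' => P c' ∧ T.entry c' = v).card := by
  by_cases hS : (D.filter fun c' => P c').Nonempty
  · obtain ⟨c'', hc''S, hmax⟩ :=
      Finset.exists_max_image _ (fun c => c.1 * wd D + (wd D - 1 - c.2)) hS
    have hc''D : c'' ∈ D := (Finset.mem_filter.1 hc''S).1
    have hc''P : P c'' := (Finset.mem_filter.1 hc''S).2
    have key : ∀ c' ∈ D, (P c' ↔ ReadBefore c' c'') := by
      intro c' hc'
      constructor
      · intro hp
        exact key_le_rb (lt_wd hc') (lt_wd hc''D) (hmax c' (Finset.mem_filter.2 ⟨hc', hp⟩))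
      · intro hrb
        exact hP c' hc' c'' hc''D hc''P hrb
    have h1 : ∀ u, (D.filter fun c' => P c' ∧ T.entry c' = u)
        = (D.filter fun c' => ReadBefore c' c'' ∧ T.entry c' = u) := by
      intro u
      apply Finset.filter_congr
      intro c' hc'
      rw [key c' hc']
    rw [h1 (v + 1), h1 v]
    exact hT c'' hc''D v
  · rw [Finset.not_nonempty_iff_eq_empty] at hS
    have h0 : ∀ u, (D.filter fun c' => P c' ∧ T.entry c' = u) = ∅ := by
      intro u
      apply Finset.eq_empty_of_forall_notMem
      intro c hc
      rw [Finset.mem_filter] at hc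
      have : c ∈ D.filter P := Finset.mem_filter.2 ⟨hc.1, hc.2.1⟩
      rw [hS] at this
      simp at this
    rw [h0 (v + 1), h0 v]

lemma content_decreasing {D : Diagram} (T : SSYT D) (hT : IsLattice T) (v : ℕ) :
    content T (v + 1) ≤ content T v := by
  classical
  rw [content_apply, content_apply]
  have := lattice_prefix T hT (fun _ => True) (by intros; trivial) v
  simpa using this

section Skew
variable {lam mu : YoungDiagram}

lemma skew_mem {c : ℕ × ℕ} :
    c ∈ lam.cells \ mu.cells ↔ mu.rowLen c.1 ≤ c.2 ∧ c.2 < lam.rowLen c.1 := by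
  obtain ⟨r, j⟩ := c
  simp only [Finset.mem_sdiff, YoungDiagram.mem_cells, YoungDiagram.mem_iff_lt_rowLen]
  omega

lemma skew_row_mono (T : SSYT (lam.cells \ mu.cells)) {r j j' : ℕ} (hj : j ≤ j')
    (h1 : (r, j) ∈ lam.cells \ mu.cells) (h2 : (r, j') ∈ lam.cells \ mu.cells) :
    T.entry (r, j) ≤ T.entry (r, j') := by
  obtain ⟨t, rfl⟩ : ∃ t, j' = j + t := ⟨j' - j, by omega⟩
  clear hj
  induction t with
  | zero => exact le_rfl
  | succ t ih =>
    have hmid : (r, j + t) ∈ lam.cells \ mu.cells := by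
      rw [skew_mem] at h1 h2 ⊢
      simp only at h1 h2 ⊢
      omega
    have hright : (r, j + t + 1) ∈ lam.cells \ mu.cells := by
      have : j + (t + 1) = j + t + 1 := by omega
      rwa [this] at h2
    exact le_trans (ih hmid) (by
      have := T.rowWeak r (j + t) hmid hright
      have heq : j + (t + 1) = j + t + 1 := by omega
      rw [heq]
      exact this)

/-- In a lattice tableau of a skew shape, the entry of a cell is at most its row index. -/
lemma entry_le_row (T : SSYT (lam.cells \ mu.cells)) (hT : IsLattice T) :
    ∀ c ∈ lam.cells \ mu.cells, T.entry c ≤ c.1 := by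
  classical
  suffices H : ∀ n, ∀ c ∈ lam.cells \ mu.cells, T.entry c ≤ n → T.entry c ≤ c.1 by
    intro c hc; exact H (T.entry c) c hc le_rfl
  intro n
  induction n with
  | zero => intro c _ h0; omega
  | succ n ih =>
    intro c hc hle
    by_cases hn : T.entry c ≤ n
    · exact ih c hc hn
    have he : T.entry c = n + 1 := by omega
    have h1 := hT c hc n
    have hmem : c ∈ (lam.cells \ mu.cells).filter
        (fun c' => ReadBefore c' c ∧ T.entry c' = n + 1) :=
      Finset.mem_filter.2 ⟨hc, rb_refl c, he⟩
    have hpos : 0 < ((lam.cells \ mu.cells).filter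
        (fun c' => ReadBefore c' c ∧ T.entry c' = n)).card :=
      lt_of_lt_of_le (Finset.card_pos.2 ⟨c, hmem⟩) h1
    obtain ⟨c', hc'⟩ := Finset.card_pos.1 hpos
    rw [Finset.mem_filter] at hc'
    obtain ⟨hc'S, hrb, he'⟩ := hc'
    rcases hrb with hlt | ⟨heq, hcle⟩
    · have := ih c' hc'S (le_of_eq he')
      omega
    · rcases eq_or_lt_of_le hcle with heq2 | hlt2
      · exfalso
        have : c' = c := Prod.ext heq heq2.symm
        rw [this] at he'
        omega
      · exfalso
        have h1' : (c.1, c.2) ∈ lam.cells \ mu.cells := by rw [Prod.mk.eta]; exact hc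
        have hceq : (c.1, c'.2) = c' := by rw [← heq, Prod.mk.eta]
        have h2' : (c.1, c'.2) ∈ lam.cells \ mu.cells := by rw [hceq]; exact hc'S
        have hmono := skew_row_mono T (le_of_lt hlt2) h1' h2'
        rw [Prod.mk.eta, hceq] at hmono
        omega

lemma bottom_closed {r r' : ℕ} (h : (r, 0) ∈ lam.cells \ mu.cells) (hr : r ≤ r')
    (hr' : r' < ht (lam.cells \ mu.cells)) : (r', 0) ∈ lam.cells \ mu.cells := by
  set S := lam.cells \ mu.cells with hS
  have hne : S.Nonempty := ⟨_, h⟩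
  obtain ⟨cm, hcm, hall⟩ := Finset.exists_max_image S (fun c => c.1) hne
  have hht : ht S = cm.1 + 1 := by
    apply le_antisymm
    · exact Finset.sup_le (fun c hc => by have := hall c hc; omega)
    · exact Finset.le_sup (f := fun c => c.1 + 1) hcm
  have hcm' : (cm.1, cm.2) ∈ S := by rwa [Prod.mk.eta]
  rw [skew_mem] at h hcm' ⊢
  simp only at h hcm' ⊢
  constructor
  · have := mu.rowLen_anti r r' hr
    omega
  · have h2 := lam.rowLen_anti r' cm.1 (by omega)
    omega
end Skew

/-- If the first column of the skew diagram has at least `i` cells, then the entry of a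
cell `(r,0)` with `r = ht - i + s` is at least `s`. -/
lemma entry_col0_ge {lam mu : YoungDiagram} (T : SSYT (lam.cells \ mu.cells))
    {i s r : ℕ} (hq : i ≤ colLenAt (lam.cells \ mu.cells) 0)
    (hr : (r, 0) ∈ lam.cells \ mu.cells)
    (hs : r = (ht (lam.cells \ mu.cells) - i) + s) :
    s ≤ T.entry (r, 0) := by
  classical
  have hrCol : (r, 0) ∈ (lam.cells \ mu.cells).filter (fun c => c.2 = 0) :=
    Finset.mem_filter.2 ⟨hr, rfl⟩
  obtain ⟨cm, hcmCol, hmall⟩ :=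
    Finset.exists_min_image ((lam.cells \ mu.cells).filter (fun c => c.2 = 0)) Prod.fst
      ⟨(r, 0), hrCol⟩
  rw [Finset.mem_filter] at hcmCol
  have hmcell : (cm.1, 0) ∈ lam.cells \ mu.cells := by
    have : (cm.1, cm.2) = (cm.1, 0) := by rw [hcmCol.2]
    rw [← this, Prod.mk.eta]
    exact hcmCol.1
  have hColEq : (lam.cells \ mu.cells).filter (fun c => c.2 = 0)
      = (Finset.Icc cm.1 (ht (lam.cells \ mu.cells) - 1)).image (fun r' => (r', 0)) := by
    ext ⟨a, b⟩
    simp only [Finset.mem_filter, Finset.mem_image, Finset.mem_Icc]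
    constructor
    · rintro ⟨haS, hb⟩
      subst hb
      refine ⟨a, ⟨hmall _ (Finset.mem_filter.2 ⟨haS, rfl⟩), ?_⟩, rfl⟩
      have := lt_ht haS
      omega
    · rintro ⟨r', ⟨hmr, hrht⟩, heq⟩
      have hb0 : b = 0 := by
        have := congrArg Prod.snd heq
        simpa using this.symm
      have ha : a = r' := by
        have := congrArg Prod.fst heq
        simpa using this.symm
      subst hb0; subst ha
      have hhtpos : a < ht (lam.cells \ mu.cells) := by
        have := lt_ht hmcell
        omega
      exact ⟨bottom_closed hmcell hmr hhtpos, rfl⟩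
  have hq2 : colLenAt (lam.cells \ mu.cells) 0 = ht (lam.cells \ mu.cells) - cm.1 := by
    have hinj : Function.Injective (fun r' : ℕ => (r', 0)) := by
      intro a b hab
      simpa using congrArg Prod.fst hab
    have hm_lt : cm.1 < ht (lam.cells \ mu.cells) := by simpa using lt_ht hmcell
    rw [colLenAt, hColEq, Finset.card_image_of_injective _ hinj, Nat.card_Icc]
    omega
  have chain : ∀ p, cm.1 + p < ht (lam.cells \ mu.cells) → p ≤ T.entry (cm.1 + p, 0) := by
    intro p
    induction p with
    | zero => intro _; exact Nat.zero_le _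
    | succ p ih =>
      intro hp
      have h1 : (cm.1 + p, 0) ∈ lam.cells \ mu.cells := bottom_closed hmcell (by omega) (by omega)
      have h2 : (cm.1 + p + 1, 0) ∈ lam.cells \ mu.cells := bottom_closed hmcell (by omega) (by omega)
      have hcs := T.colStrict (cm.1 + p) 0 h1 h2
      have := ih (by omega)
      show p + 1 ≤ T.entry (cm.1 + p + 1, 0)
      omega
  have hmr : cm.1 ≤ r := hmall _ hrCol
  have hrht : r < ht (lam.cells \ mu.cells) := lt_ht hr
  have hchain := chain (r - cm.1) (by omega)
  have hrew : cm.1 + (r - cm.1) = r := by omega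
  rw [hrew] at hchain
  omega

lemma getD_replicate' {a k x d : ℕ} : (List.replicate a x).getD k d = if k < a then x else d := by
  rcases lt_or_ge k a with h | h
  · rw [List.getD_eq_getElem _ _ (by simpa using h)]
    simp [h]
  · rw [List.getD_eq_default _ _ (by simpa using h)]
    simp [not_lt.2 h]

lemma mem_diagramOfRows {L : List ℕ} {c : ℕ × ℕ} :
    c ∈ diagramOfRows L ↔ c.1 < L.length ∧ c.2 < L.getD c.1 0 := by
  obtain ⟨r, j⟩ := c
  unfold diagramOfRows
  simp only [Finset.mem_biUnion, Finset.mem_range, Finset.mem_image]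
  constructor
  · rintro ⟨i, hi, j', hj', h⟩
    have h1 : i = r := congrArg Prod.fst h
    have h2 : j' = j := congrArg Prod.snd h
    subst h1; subst h2
    exact ⟨hi, hj'⟩
  · rintro ⟨h1, h2⟩
    exact ⟨r, h1, j, h2, rfl⟩

lemma rowContent_diagramOfRows (L : List ℕ) (k : ℕ) :
    rowContent (diagramOfRows L) k = L.getD k 0 := by
  classical
  unfold rowContent
  rw [sum_single_apply]
  have heq : (diagramOfRows L).filter (fun c => c.1 = k)
      = (Finset.range (L.getD k 0)).image (fun j => (k, j)) := by
    ext ⟨r, j⟩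
    simp only [Finset.mem_filter, mem_diagramOfRows, Finset.mem_image, Finset.mem_range]
    constructor
    · rintro ⟨⟨h1, h2⟩, h3⟩
      subst h3
      exact ⟨j, h2, rfl⟩
    · rintro ⟨j', hj', heq⟩
      have h1 : k = r := congrArg Prod.fst heq
      have h2 : j' = j := congrArg Prod.snd heq
      subst h1; subst h2
      have hlen : k < L.length := by
        by_contra hcon
        rw [List.getD_eq_default _ _ (by omega)] at hj'
        omega
      exact ⟨⟨hlen, hj'⟩, rfl⟩
  rw [heq, Finset.card_image_of_injective, Finset.card_range]
  intro a b hab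
  simpa using congrArg Prod.snd hab

lemma staircaseRows_append (β : List ℕ) (a : ℕ) :
    staircaseRows (β ++ [a]) = List.replicate a (β.length + 1) ++ staircaseRows β := by
  unfold staircaseRows
  have hlen : (β ++ [a]).length = β.length + 1 := by simp
  rw [hlen, List.range_succ (n := β.length), List.reverse_append]
  simp only [List.reverse_singleton, List.singleton_append, List.map_cons, List.flatten_cons]
  congr 1
  · rw [List.getD_append_right _ _ _ _ le_rfl]
    simp
  · congr 1
    apply List.map_congr_left
    intro i hi
    rw [List.mem_reverse, List.mem_range] at hi
    rw [List.getD_append _ _ _ _ hi]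

lemma staircaseRows_props : ∀ (β : List ℕ), (∀ b ∈ β, 0 < b) →
    (staircaseRows β).getD 0 0 = β.length ∧
    ∀ k, (staircaseRows β).getD (k + 1) 0 ≤ (staircaseRows β).getD k 0 ∧
         (staircaseRows β).getD k 0 ≤ (staircaseRows β).getD (k + 1) 0 + 1 := by
  intro β
  induction β using List.reverseRecOn with
  | nil => intro _; refine ⟨by simp [staircaseRows], by intro k; simp [staircaseRows]⟩
  | append_singleton β a ih =>
    intro hpos
    have hβ : ∀ b ∈ β, 0 < b := fun b hb => hpos b (by simp [hb])
    have ha : 0 < a := hpos a (by simp)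
    obtain ⟨ih0, ihk⟩ := ih hβ
    rw [staircaseRows_append]
    have hgetD : ∀ k, (List.replicate a (β.length + 1) ++ staircaseRows β).getD k 0
        = if k < a then β.length + 1 else (staircaseRows β).getD (k - a) 0 := by
      intro k
      rcases lt_or_ge k a with h | h
      · rw [List.getD_append _ _ _ _ (by simpa using h), getD_replicate']
        simp [h]
      · rw [List.getD_append_right _ _ _ _ (by simpa using h)]
        simp [List.length_replicate]
        exact fun h' => absurd h' (by omega)
    constructor
    · rw [hgetD]
      simp [ha]
    · intro k
      rw [hgetD, hgetD]
      by_cases h1 : k + 1 < a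
      · rw [if_pos h1, if_pos (by omega)]
        omega
      · rw [if_neg h1]
        by_cases h2 : k < a
        · rw [if_pos h2]
          have hka : k + 1 - a = 0 := by omega
          rw [hka, ih0]
          omega
        · rw [if_neg h2]
          have hrw : k + 1 - a = (k - a) + 1 := by omega
          rw [hrw]
          exact ihk (k - a)

/-- Characterization direction: a fat staircase content is decreasing with unit gaps. -/
lemma fs_dec_nogap {d : ℕ →₀ ℕ} (h : IsFatStaircase d) :
    (∀ k, d (k + 1) ≤ d k) ∧ (∀ k, d k ≤ d (k + 1) + 1) := by
  obtain ⟨α, hpos, hd⟩ := h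
  have hk : ∀ k, d k = (staircaseRows α).getD k 0 := by
    intro k
    rw [hd]
    exact rowContent_diagramOfRows _ k
  obtain ⟨_, hprops⟩ := staircaseRows_props α hpos
  exact ⟨fun k => by rw [hk, hk]; exact (hprops k).1, fun k => by rw [hk, hk]; exact (hprops k).2⟩

/-- Construction direction: decreasing with unit gaps implies fat staircase. -/
lemma fs_of_nogap : ∀ n (d : ℕ →₀ ℕ), d 0 = n → (∀ k, d (k + 1) ≤ d k) →
    (∀ k, d k ≤ d (k + 1) + 1) →
    ∃ β : List ℕ, (∀ b ∈ β, 0 < b) ∧ β.length = n ∧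
      ∀ k, d k = (staircaseRows β).getD k 0 := by
  intro n
  induction n with
  | zero =>
    intro d h0 hdec _
    have hmono : ∀ k, d k = 0 := by
      intro k
      induction k with
      | zero => exact h0
      | succ k ih => have := hdec k; omega
    exact ⟨[], by simp, rfl, fun k => by rw [hmono k]; simp [staircaseRows]⟩
  | succ n ih =>
    intro d h0 hdec hgap
    have hmono : ∀ k k', k ≤ k' → d k' ≤ d k := by
      intro k k' hk
      obtain ⟨t, rfl⟩ : ∃ t, k' = k + t := ⟨k' - k, by omega⟩
      clear hk
      induction t with
      | zero => exact le_rfl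
      | succ t iht =>
        have := hdec (k + t)
        show d (k + t + 1) ≤ d k
        omega
    have hzero : ∃ k, d k ≤ n := by
      by_contra hcon
      push_neg at hcon
      have hss : Finset.range (d.support.card + 1) ⊆ d.support := by
        intro k _
        rw [Finsupp.mem_support_iff]
        have := hcon k
        omega
      have := Finset.card_le_card hss
      rw [Finset.card_range] at this
      omega
    have ha1 : 1 ≤ Nat.find hzero := by
      rcases Nat.eq_zero_or_pos (Nat.find hzero) with h | h
      · have := Nat.find_spec hzero
        rw [h] at this
        omega
      · exact h
    set a := Nat.find hzero with hadef
    have haspec : d a ≤ n := Nat.find_spec hzero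
    have hdkeq : ∀ k < a, d k = n + 1 := by
      intro k hk
      have h1 : ¬ d k ≤ n := Nat.find_min hzero hk
      have h2 := hmono 0 k (Nat.zero_le k)
      omega
    have hda : d a = n := by
      have h1 : d (a - 1) = n + 1 := hdkeq (a - 1) (by omega)
      have h2 := hgap (a - 1)
      have h3 : a - 1 + 1 = a := by omega
      rw [h3] at h2
      omega
    have hainj : Function.Injective (fun k : ℕ => k + a) := add_left_injective a
    set e := Finsupp.comapDomain (fun k : ℕ => k + a) d (hainj.injOn) with hedef
    have he : ∀ k, e k = d (k + a) := fun k => rfl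
    obtain ⟨β, hβpos, hβlen, hβ⟩ := ih e
      (by rw [he 0]; simpa using hda)
      (fun k => by rw [he, he]; simpa [Nat.add_right_comm] using hdec (k + a))
      (fun k => by rw [he, he]; simpa [Nat.add_right_comm] using hgap (k + a))
    refine ⟨β ++ [a], ?_, by simp [hβlen], ?_⟩
    · intro b hb
      rcases List.mem_append.1 hb with h | h
      · exact hβpos b h
      · simp at h
        omega
    · intro k
      rw [staircaseRows_append, hβlen]
      rcases lt_or_ge k a with hk | hk
      · rw [List.getD_append _ _ _ _ (by simpa using hk), getD_replicate']
        simp [hk, hdkeq k hk]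
      · rw [List.getD_append_right _ _ _ _ (by simpa using hk)]
        rw [List.length_replicate, ← hβ (k - a), he]
        congr 1
        omega

/-- The content of one column of length `l`. -/
noncomputable def eF (l : ℕ) : ℕ →₀ ℕ := ∑ s ∈ Finset.range l, Finsupp.single s 1

lemma eF_apply (l k : ℕ) : eF l k = if k < l then 1 else 0 := by
  classical
  rw [eF, sum_single_apply, Finset.filter_eq']
  by_cases h : k < l
  · rw [if_pos (Finset.mem_range.2 h), if_pos h, Finset.card_singleton]
  · rw [if_neg (by simpa using h), if_neg h, Finset.card_empty]

lemma not_fs_add (d0 : ℕ →₀ ℕ) (l : ℕ) (hgap : ∃ k, d0 (k + 1) + 2 ≤ d0 k) :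
    ¬ IsFatStaircase (d0 + eF l) := by
  intro hfs
  obtain ⟨k, hk⟩ := hgap
  have h2 := (fs_dec_nogap hfs).2 k
  rw [Finsupp.add_apply, Finsupp.add_apply, eF_apply, eF_apply] at h2
  split_ifs at h2 <;> omega

lemma SSYT.ext' {E : Diagram} {T1 T2 : SSYT E} (h : T1.entry = T2.entry) : T1 = T2 := by
  cases T1; cases T2; simpa using h

lemma lr_finite (E : Diagram) (d : ℕ →₀ ℕ) :
    Finite {T : SSYT E // IsLattice T ∧ content T = d} := by
  classical
  have hmem : ∀ (T : SSYT E), content T = d → ∀ c ∈ E, T.entry c ∈ insert 0 d.support := by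
    intro T hTd c hc
    by_cases h0 : T.entry c = 0
    · rw [h0]; exact Finset.mem_insert_self _ _
    · apply Finset.mem_insert_of_mem
      rw [Finsupp.mem_support_iff]
      have hval : content T (T.entry c) ≠ 0 := by
        rw [content_apply]
        have hmm : c ∈ E.filter (fun c' => T.entry c' = T.entry c) :=
          Finset.mem_filter.2 ⟨hc, rfl⟩
        have hpos := Finset.card_pos.2 ⟨c, hmm⟩
        omega
      rwa [hTd] at hval
  set F : {T : SSYT E // IsLattice T ∧ content T = d} →
      ({c : ℕ × ℕ // c ∈ E} → {u : ℕ // u ∈ insert 0 d.support}) :=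
    fun x c => ⟨x.1.entry c.1, hmem x.1 x.2.2 c.1 c.2⟩ with hF
  have hinj : Function.Injective F := by
    intro x y h
    apply Subtype.ext
    apply SSYT.ext'
    funext c
    by_cases hc : c ∈ E
    · have := congrFun h ⟨c, hc⟩
      exact Subtype.ext_iff.1 this
    · rw [x.1.zero_outside c hc, y.1.zero_outside c hc]
  exact Finite.of_injective F hinj

lemma lrCount_ne_zero_of {E : Diagram} {d : ℕ →₀ ℕ} (T : SSYT E) (h1 : IsLattice T)
    (h2 : content T = d) : lrCount E d ≠ 0 := by
  rw [lrCount, Nat.card_ne_zero]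
  exact ⟨⟨⟨T, h1, h2⟩⟩, lr_finite E d⟩

lemma ht_colD (l : ℕ) : ht (colD l) = l := by
  rcases Nat.eq_zero_or_pos l with rfl | hl
  · rfl
  · apply le_antisymm
    · apply Finset.sup_le
      intro c hc
      rw [colD, Finset.mem_image] at hc
      obtain ⟨s, hs, rfl⟩ := hc
      rw [Finset.mem_range] at hs
      omega
    · have hmem : (l - 1, 0) ∈ colD l := by
        rw [colD, Finset.mem_image]
        exact ⟨l - 1, Finset.mem_range.2 (by omega), rfl⟩
      have h2 : (l - 1) + 1 ≤ (colD l).sup (fun c => c.1 + 1) :=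
        Finset.le_sup (f := fun c : ℕ × ℕ => c.1 + 1) hmem
      show l ≤ (colD l).sup (fun c => c.1 + 1)
      omega

lemma wd_colD (l : ℕ) (hl : 1 ≤ l) : wd (colD l) = 1 := by
  apply le_antisymm
  · apply Finset.sup_le
    intro c hc
    rw [colD, Finset.mem_image] at hc
    obtain ⟨s, _, rfl⟩ := hc
    omega
  · have hmem : (0, 0) ∈ colD l := by
      rw [colD, Finset.mem_image]
      exact ⟨0, Finset.mem_range.2 (by omega), rfl⟩
    have h2 : 0 + 1 ≤ (colD l).sup (fun c => c.2 + 1) :=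
      Finset.le_sup (f := fun c : ℕ × ℕ => c.2 + 1) hmem
    show 1 ≤ (colD l).sup (fun c => c.2 + 1)
    omega

lemma colD_zero : colD 0 = (∅ : Diagram) := by
  rw [colD]
  simp

lemma nearConcat_colD_zero_left (i : ℕ) (D : Diagram) : nearConcat i D (colD 0) = D := by
  rw [nearConcat, colD_zero]
  have h1 : ht (∅ : Diagram) = 0 := rfl
  rw [h1]
  simp only [Finset.image_empty, Finset.union_empty, Nat.zero_sub]
  have : (fun c : ℕ × ℕ => (c.1 + 0, c.2)) = id := by
    funext c
    simp
  rw [this, Finset.image_id]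

lemma nearConcat_colD_zero_right (i : ℕ) (D : Diagram) : nearConcat i (colD 0) D = D := by
  rw [nearConcat, colD_zero]
  have h2 : wd (∅ : Diagram) = 0 := rfl
  rw [h2]
  simp only [Finset.image_empty, Finset.empty_union]
  have : (fun c : ℕ × ℕ => (c.1, c.2 + 0)) = id := by
    funext c
    simp
  rw [this, Finset.image_id]

lemma part1 {lam mu : YoungDiagram} (D : Diagram) (hDeq : D = lam.cells \ mu.cells)
    (T0 : SSYT D) (hlat : IsLattice T0) (i l : ℕ) :
    ∃ T : SSYT (nearConcat i D (colD l)), IsLattice T ∧ content T = content T0 + eF l := by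
  classical
  have hbound : ∀ c ∈ D, T0.entry c ≤ c.1 := by
    subst hDeq
    exact entry_le_row T0 hlat
  set A : Diagram := D.image (fun c => (c.1 + (l - i), c.2)) with hA
  set B : Diagram := (Finset.range l).image (fun s => (s, wd D)) with hB
  have hinjA : Function.Injective (fun c : ℕ × ℕ => (c.1 + (l - i), c.2)) := by
    intro a b hab
    have h1 := congrArg Prod.fst hab
    have h2 := congrArg Prod.snd hab
    simp only at h1 h2
    exact Prod.ext (by omega) h2
  have hinjB : Function.Injective (fun s : ℕ => (s, wd D)) := by
    intro a b hab
    simpa using congrArg Prod.fst hab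
  have hE : nearConcat i D (colD l) = A ∪ B := by
    rw [nearConcat, ht_colD, colD, Finset.image_image]
    congr 1
    apply Finset.image_congr
    intro s _
    simp [Function.comp]
  rw [hE]
  have memA : ∀ r j, ((r, j) ∈ A ↔ l - i ≤ r ∧ (r - (l - i), j) ∈ D) := by
    intro r j
    rw [hA, Finset.mem_image]
    constructor
    · rintro ⟨⟨a, b⟩, hab, hceq⟩
      have h1 : a + (l - i) = r := congrArg Prod.fst hceq
      have h2 : b = j := congrArg Prod.snd hceq
      have h3 : r - (l - i) = a := by omega
      refine ⟨by omega, ?_⟩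
      rw [h3, ← h2]
      exact hab
    · rintro ⟨h1, h2⟩
      refine ⟨(r - (l - i), j), h2, ?_⟩
      show (r - (l - i) + (l - i), j) = (r, j)
      simp only [Prod.mk.injEq, and_true]
      omega
  have memB : ∀ r j, ((r, j) ∈ B ↔ r < l ∧ j = wd D) := by
    intro r j
    rw [hB, Finset.mem_image]
    constructor
    · rintro ⟨s, hs, hceq⟩
      have h1 : s = r := congrArg Prod.fst hceq
      have h2 : wd D = j := congrArg Prod.snd hceq
      rw [Finset.mem_range] at hs
      exact ⟨by omega, h2.symm⟩
    · rintro ⟨h1, rfl⟩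
      exact ⟨r, Finset.mem_range.2 h1, rfl⟩
  have hAcol : ∀ c ∈ A, c.2 < wd D := by
    intro c hc
    rw [hA, Finset.mem_image] at hc
    obtain ⟨c0, hc0, rfl⟩ := hc
    show c0.2 < wd D
    exact lt_wd hc0
  have hABdis : Disjoint A B := by
    rw [Finset.disjoint_left]
    intro c hcA hcB
    have h1 := hAcol c hcA
    rw [hB, Finset.mem_image] at hcB
    obtain ⟨s, _, rfl⟩ := hcB
    have h2 : wd D < wd D := h1
    exact lt_irrefl (wd D) h2
  set ent : ℕ × ℕ → ℕ :=
    fun c => if c ∈ A then T0.entry (c.1 - (l - i), c.2) else if c ∈ B then c.1 else 0 with hent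
  have entA : ∀ c ∈ A, ent c = T0.entry (c.1 - (l - i), c.2) := by
    intro c hc
    simp only [hent]
    rw [if_pos hc]
  have entB : ∀ c ∈ B, ent c = c.1 := by
    intro c hc
    simp only [hent]
    rw [if_neg (Finset.disjoint_right.1 hABdis hc), if_pos hc]
  have entA' : ∀ c0 ∈ D, ent (c0.1 + (l - i), c0.2) = T0.entry c0 := by
    intro c0 hc0
    have hmem : (c0.1 + (l - i), c0.2) ∈ A := Finset.mem_image_of_mem _ hc0
    rw [entA _ hmem]
    have heq : ((c0.1 + (l - i), c0.2).1 - (l - i), (c0.1 + (l - i), c0.2).2) = c0 := by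
      rw [← Prod.mk.eta (p := c0)]
      simp only [Prod.mk.injEq, and_true]
      omega
    rw [heq]
  refine ⟨⟨ent, ?_, ?_, ?_⟩, ?_, ?_⟩
  · -- rowWeak
    intro r j h1 h2
    rcases Finset.mem_union.1 h1 with hA1 | hB1 <;> rcases Finset.mem_union.1 h2 with hA2 | hB2
    · rw [entA _ hA1, entA _ hA2]
      obtain ⟨ht1, hd1⟩ := (memA r j).1 hA1
      obtain ⟨ht2, hd2⟩ := (memA r (j + 1)).1 hA2
      exact T0.rowWeak (r - (l - i)) j hd1 hd2
    · rw [entA _ hA1, entB _ hB2]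
      obtain ⟨ht1, hd1⟩ := (memA r j).1 hA1
      have hb : T0.entry (r - (l - i), j) ≤ r - (l - i) := hbound (r - (l - i), j) hd1
      show T0.entry (r - (l - i), j) ≤ r
      omega
    · exfalso
      obtain ⟨hr1, hj1⟩ := (memB r j).1 hB1
      obtain ⟨ht2, hd2⟩ := (memA r (j + 1)).1 hA2
      have hcon : j + 1 < wd D := lt_wd hd2
      omega
    · exfalso
      obtain ⟨_, hj1⟩ := (memB r j).1 hB1
      obtain ⟨_, hj2⟩ := (memB r (j + 1)).1 hB2
      omega
  · -- colStrict
    intro r j h1 h2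
    rcases Finset.mem_union.1 h1 with hA1 | hB1 <;> rcases Finset.mem_union.1 h2 with hA2 | hB2
    · rw [entA _ hA1, entA _ hA2]
      obtain ⟨ht1, hd1⟩ := (memA r j).1 hA1
      obtain ⟨ht2, hd2⟩ := (memA (r + 1) j).1 hA2
      show T0.entry (r - (l - i), j) < T0.entry (r + 1 - (l - i), j)
      have hrw : r + 1 - (l - i) = (r - (l - i)) + 1 := by omega
      rw [hrw]
      apply T0.colStrict (r - (l - i)) j hd1
      rw [← hrw]
      exact hd2
    · exfalso
      have hj1 : j < wd D := hAcol _ hA1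
      obtain ⟨_, hj2⟩ := (memB (r + 1) j).1 hB2
      omega
    · exfalso
      obtain ⟨_, hj1⟩ := (memB r j).1 hB1
      have hj2 : j < wd D := hAcol _ hA2
      omega
    · rw [entB _ hB1, entB _ hB2]
      exact Nat.lt_succ_self r
  · -- zero outside
    intro c hc
    rw [Finset.mem_union] at hc
    push_neg at hc
    simp only [hent]
    rw [if_neg hc.1, if_neg hc.2]
  · -- lattice
    intro c hc v
    have hsplit : ∀ u, ((A ∪ B).filter (fun c' => ReadBefore c' c ∧ ent c' = u)).card
        = (D.filter (fun c0 => ReadBefore (c0.1 + (l - i), c0.2) c ∧ T0.entry c0 = u)).card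
          + ((Finset.range l).filter (fun s => ReadBefore (s, wd D) c ∧ s = u)).card := by
      intro u
      rw [Finset.filter_union,
        Finset.card_union_of_disjoint (Finset.disjoint_filter_filter hABdis)]
      congr 1
      · rw [hA, Finset.filter_image, Finset.card_image_of_injective _ hinjA]
        apply congrArg
        apply Finset.filter_congr
        intro c0 hc0
        show ReadBefore (c0.1 + (l - i), c0.2) c ∧ ent (c0.1 + (l - i), c0.2) = u ↔ _
        rw [entA' c0 hc0]
      · rw [hB, Finset.filter_image, Finset.card_image_of_injective _ hinjB]
        apply congrArg
        apply Finset.filter_congr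
        intro s hs
        show ReadBefore (s, wd D) c ∧ ent (s, wd D) = u ↔ _
        rw [entB _ (Finset.mem_image_of_mem _ hs)]
    rw [hsplit (v + 1), hsplit v]
    apply Nat.add_le_add
    · apply lattice_prefix T0 hlat (fun c0 => ReadBefore (c0.1 + (l - i), c0.2) c)
      intro c1 _ c2 _ hP hrb
      exact rb_trans (rb_shift_row (l - i) hrb) hP
    · by_cases hne : ((Finset.range l).filter
          (fun s => ReadBefore (s, wd D) c ∧ s = v + 1)).Nonempty
      · obtain ⟨s, hs⟩ := hne
        rw [Finset.mem_filter, Finset.mem_range] at hs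
        obtain ⟨hsl, hrb, hseq⟩ := hs
        subst hseq
        have hv : v ∈ (Finset.range l).filter (fun s => ReadBefore (s, wd D) c ∧ s = v) :=
          Finset.mem_filter.2 ⟨Finset.mem_range.2 (by omega), rb_mono_row (by omega) hrb, rfl⟩
        have hle1 : ((Finset.range l).filter
            (fun s => ReadBefore (s, wd D) c ∧ s = v + 1)).card ≤ 1 := by
          apply Finset.card_le_one.2
          intro a ha b hb
          rw [Finset.mem_filter] at ha hb
          omega
        have hvpos := Finset.card_pos.2 ⟨v, hv⟩
        omega
      · rw [Finset.not_nonempty_iff_eq_empty.1 hne]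
        simp
  · -- content
    show (∑ c ∈ A ∪ B, Finsupp.single (ent c) 1) = content T0 + eF l
    rw [Finset.sum_union hABdis]
    congr 1
    · rw [hA, Finset.sum_image (fun a _ b _ h => hinjA h)]
      show (∑ c0 ∈ D, Finsupp.single (ent (c0.1 + (l - i), c0.2)) 1)
        = ∑ c0 ∈ D, Finsupp.single (T0.entry c0) 1
      apply Finset.sum_congr rfl
      intro c0 hc0
      rw [entA' c0 hc0]
    · rw [hB, Finset.sum_image (fun a _ b _ h => hinjB h)]
      show (∑ s ∈ Finset.range l, Finsupp.single (ent (s, wd D)) 1)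
        = ∑ s ∈ Finset.range l, Finsupp.single s 1
      apply Finset.sum_congr rfl
      intro s hs
      rw [entB _ (Finset.mem_image_of_mem _ hs)]

lemma part2 {lam mu : YoungDiagram} (D : Diagram) (hDeq : D = lam.cells \ mu.cells)
    (T0 : SSYT D) (hlat : IsLattice T0) (i l : ℕ) (hl : 1 ≤ l)
    (hfirst : i ≤ colLenAt D (leftCol D)) :
    ∃ T : SSYT (nearConcat i (colD l) D), IsLattice T ∧ content T = content T0 + eF l := by
  classical
  have hkey : ∀ r, (r, 0) ∈ D → ht D - i ≤ r → r - (ht D - i) ≤ T0.entry (r, 0) := by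
    intro r h hge
    have hleft : leftCol D = 0 := by
      apply Nat.sInf_eq_zero.2
      exact Or.inl ⟨r, h⟩
    rw [hleft] at hfirst
    subst hDeq
    exact entry_col0_ge T0 hfirst h (by omega)
  set B : Diagram := (Finset.range l).image (fun s => (s + (ht D - i), 0)) with hB
  set A : Diagram := D.image (fun c => (c.1, c.2 + 1)) with hA
  have hinjA : Function.Injective (fun c : ℕ × ℕ => (c.1, c.2 + 1)) := by
    intro a b hab
    have h1 := congrArg Prod.fst hab
    have h2 := congrArg Prod.snd hab
    simp only at h1 h2
    exact Prod.ext h1 (by omega)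
  have hinjB : Function.Injective (fun s : ℕ => (s + (ht D - i), 0)) := by
    intro a b hab
    have := congrArg Prod.fst hab
    simp only at this
    omega
  have hE : nearConcat i (colD l) D = B ∪ A := by
    rw [nearConcat, wd_colD l hl, colD, Finset.image_image]
    rfl
  rw [hE]
  have memA : ∀ r j, ((r, j) ∈ A ↔ 1 ≤ j ∧ (r, j - 1) ∈ D) := by
    intro r j
    rw [hA, Finset.mem_image]
    constructor
    · rintro ⟨⟨a, b⟩, hab, hceq⟩
      have h1 : a = r := congrArg Prod.fst hceq
      have h2 : b + 1 = j := congrArg Prod.snd hceq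
      have h3 : j - 1 = b := by omega
      refine ⟨by omega, ?_⟩
      rw [h3, ← h1]
      exact hab
    · rintro ⟨h1, h2⟩
      refine ⟨(r, j - 1), h2, ?_⟩
      show (r, j - 1 + 1) = (r, j)
      simp only [Prod.mk.injEq, true_and]
      omega
  have memB : ∀ r j, ((r, j) ∈ B ↔ j = 0 ∧ ht D - i ≤ r ∧ r < (ht D - i) + l) := by
    intro r j
    rw [hB, Finset.mem_image]
    constructor
    · rintro ⟨s, hs, hceq⟩
      have h1 : s + (ht D - i) = r := congrArg Prod.fst hceq
      have h2 : (0 : ℕ) = j := congrArg Prod.snd hceq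
      rw [Finset.mem_range] at hs
      exact ⟨h2.symm, by omega, by omega⟩
    · rintro ⟨rfl, h1, h2⟩
      refine ⟨r - (ht D - i), Finset.mem_range.2 (by omega), ?_⟩
      show (r - (ht D - i) + (ht D - i), 0) = (r, 0)
      simp only [Prod.mk.injEq, and_true]
      omega
  have hAcol : ∀ c ∈ A, 1 ≤ c.2 := by
    intro c hc
    rw [hA, Finset.mem_image] at hc
    obtain ⟨c0, hc0, rfl⟩ := hc
    show 1 ≤ c0.2 + 1
    omega
  have hABdis : Disjoint B A := by
    rw [Finset.disjoint_right]
    intro c hcA hcB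
    have h1 := hAcol c hcA
    rw [hB, Finset.mem_image] at hcB
    obtain ⟨s, _, rfl⟩ := hcB
    have h2 : 1 ≤ (0 : ℕ) := h1
    omega
  set ent : ℕ × ℕ → ℕ :=
    fun c => if c ∈ A then T0.entry (c.1, c.2 - 1)
      else if c ∈ B then c.1 - (ht D - i) else 0 with hent
  have entA : ∀ c ∈ A, ent c = T0.entry (c.1, c.2 - 1) := by
    intro c hc
    simp only [hent]
    rw [if_pos hc]
  have entB : ∀ c ∈ B, ent c = c.1 - (ht D - i) := by
    intro c hc
    simp only [hent]
    rw [if_neg (Finset.disjoint_left.1 hABdis hc), if_pos hc]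
  have entA' : ∀ c0 ∈ D, ent (c0.1, c0.2 + 1) = T0.entry c0 := by
    intro c0 hc0
    have hmem : (c0.1, c0.2 + 1) ∈ A := Finset.mem_image_of_mem _ hc0
    rw [entA _ hmem]
    have heq : ((c0.1, c0.2 + 1).1, (c0.1, c0.2 + 1).2 - 1) = c0 := by
      rw [← Prod.mk.eta (p := c0)]
      simp only [Prod.mk.injEq, true_and]
      omega
    rw [heq]
  have entB' : ∀ s, s < l → ent (s + (ht D - i), 0) = s := by
    intro s hs
    have hmem : (s + (ht D - i), 0) ∈ B :=
      Finset.mem_image_of_mem _ (Finset.mem_range.2 hs)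
    rw [entB _ hmem]
    show s + (ht D - i) - (ht D - i) = s
    omega
  refine ⟨⟨ent, ?_, ?_, ?_⟩, ?_, ?_⟩
  · -- rowWeak
    intro r j h1 h2
    rcases Finset.mem_union.1 h1 with hB1 | hA1 <;> rcases Finset.mem_union.1 h2 with hB2 | hA2
    · exfalso
      obtain ⟨hj1, _⟩ := (memB r j).1 hB1
      obtain ⟨hj2, _⟩ := (memB r (j + 1)).1 hB2
      omega
    · -- B then A : the interesting case
      rw [entB _ hB1, entA _ hA2]
      obtain ⟨hj1, hge, hlt⟩ := (memB r j).1 hB1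
      obtain ⟨hj2, hd2⟩ := (memA r (j + 1)).1 hA2
      subst hj1
      have hd2' : (r, 0) ∈ D := by
        have : (0 : ℕ) + 1 - 1 = 0 := rfl
        rwa [this] at hd2
      have := hkey r hd2' hge
      show (r, 0).1 - (ht D - i) ≤ T0.entry ((r, 0 + 1).1, (r, 0 + 1).2 - 1)
      show r - (ht D - i) ≤ T0.entry (r, 0 + 1 - 1)
      have hz : (0 : ℕ) + 1 - 1 = 0 := rfl
      rw [hz]
      exact this
    · exfalso
      obtain ⟨hj1, _⟩ := (memA r j).1 hA1
      obtain ⟨hj2, _, _⟩ := (memB r (j + 1)).1 hB2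
      omega
    · rw [entA _ hA1, entA _ hA2]
      obtain ⟨hj1, hd1⟩ := (memA r j).1 hA1
      obtain ⟨hj2, hd2⟩ := (memA r (j + 1)).1 hA2
      show T0.entry (r, j - 1) ≤ T0.entry (r, j + 1 - 1)
      have hz : j + 1 - 1 = (j - 1) + 1 := by omega
      rw [hz]
      apply T0.rowWeak r (j - 1) hd1
      rw [← hz]
      exact hd2
  · -- colStrict
    intro r j h1 h2
    rcases Finset.mem_union.1 h1 with hB1 | hA1 <;> rcases Finset.mem_union.1 h2 with hB2 | hA2
    · rw [entB _ hB1, entB _ hB2]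
      obtain ⟨_, hge, _⟩ := (memB r j).1 hB1
      show r - (ht D - i) < r + 1 - (ht D - i)
      omega
    · exfalso
      obtain ⟨hj1, _⟩ := (memB r j).1 hB1
      obtain ⟨hj2, _⟩ := (memA (r + 1) j).1 hA2
      omega
    · exfalso
      obtain ⟨hj1, _⟩ := (memA r j).1 hA1
      obtain ⟨hj2, _, _⟩ := (memB (r + 1) j).1 hB2
      omega
    · rw [entA _ hA1, entA _ hA2]
      obtain ⟨hj1, hd1⟩ := (memA r j).1 hA1
      obtain ⟨hj2, hd2⟩ := (memA (r + 1) j).1 hA2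
      exact T0.colStrict r (j - 1) hd1 hd2
  · -- zero outside
    intro c hc
    rw [Finset.mem_union] at hc
    push_neg at hc
    simp only [hent]
    rw [if_neg hc.2, if_neg hc.1]
  · -- lattice
    intro c hc v
    have hsplit : ∀ u, ((B ∪ A).filter (fun c' => ReadBefore c' c ∧ ent c' = u)).card
        = ((Finset.range l).filter
            (fun s => ReadBefore (s + (ht D - i), 0) c ∧ s = u)).card
          + (D.filter (fun c0 => ReadBefore (c0.1, c0.2 + 1) c ∧ T0.entry c0 = u)).card := by
      intro u
      rw [Finset.filter_union,
        Finset.card_union_of_disjoint (Finset.disjoint_filter_filter hABdis)]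
      congr 1
      · rw [hB, Finset.filter_image, Finset.card_image_of_injective _ hinjB]
        apply congrArg
        apply Finset.filter_congr
        intro s hs
        rw [Finset.mem_range] at hs
        show ReadBefore (s + (ht D - i), 0) c ∧ ent (s + (ht D - i), 0) = u ↔ _
        rw [entB' s hs]
      · rw [hA, Finset.filter_image, Finset.card_image_of_injective _ hinjA]
        apply congrArg
        apply Finset.filter_congr
        intro c0 hc0
        show ReadBefore (c0.1, c0.2 + 1) c ∧ ent (c0.1, c0.2 + 1) = u ↔ _
        rw [entA' c0 hc0]
    rw [hsplit (v + 1), hsplit v]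
    apply Nat.add_le_add
    · by_cases hne : ((Finset.range l).filter
          (fun s => ReadBefore (s + (ht D - i), 0) c ∧ s = v + 1)).Nonempty
      · obtain ⟨s, hs⟩ := hne
        rw [Finset.mem_filter, Finset.mem_range] at hs
        obtain ⟨hsl, hrb, hseq⟩ := hs
        subst hseq
        have hrb' : ReadBefore (v + (ht D - i), 0) c := rb_mono_row (by omega) hrb
        have hv : v ∈ (Finset.range l).filter
            (fun s => ReadBefore (s + (ht D - i), 0) c ∧ s = v) :=
          Finset.mem_filter.2 ⟨Finset.mem_range.2 (by omega), hrb', rfl⟩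
        have hle1 : ((Finset.range l).filter
            (fun s => ReadBefore (s + (ht D - i), 0) c ∧ s = v + 1)).card ≤ 1 := by
          apply Finset.card_le_one.2
          intro a ha b hb
          rw [Finset.mem_filter] at ha hb
          omega
        have hvpos := Finset.card_pos.2 ⟨v, hv⟩
        omega
      · rw [Finset.not_nonempty_iff_eq_empty.1 hne]
        simp
    · apply lattice_prefix T0 hlat (fun c0 => ReadBefore (c0.1, c0.2 + 1) c)
      intro c1 _ c2 _ hP hrb
      exact rb_trans (rb_shift_col 1 hrb) hP
  · -- content
    show (∑ c ∈ B ∪ A, Finsupp.single (ent c) 1) = content T0 + eF l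
    rw [Finset.sum_union hABdis]
    rw [add_comm (∑ c ∈ B, Finsupp.single (ent c) 1)]
    congr 1
    · rw [hA, Finset.sum_image (fun a _ b _ h => hinjA h)]
      show (∑ c0 ∈ D, Finsupp.single (ent (c0.1, c0.2 + 1)) 1)
        = ∑ c0 ∈ D, Finsupp.single (T0.entry c0) 1
      apply Finset.sum_congr rfl
      intro c0 hc0
      rw [entA' c0 hc0]
    · rw [hB, Finset.sum_image (fun a _ b _ h => hinjB h)]
      show (∑ s ∈ Finset.range l, Finsupp.single (ent (s + (ht D - i), 0)) 1)
        = ∑ s ∈ Finset.range l, Finsupp.single s 1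
      apply Finset.sum_congr rfl
      intro s hs
      rw [Finset.mem_range] at hs
      rw [entB' s hs]

/-- adding one column (on either side, at any valid depth) to a
skew diagram that is not a sum of fat staircases never produces a sum of fat
staircases. -/
theorem nearConcat_col_not_sumOfFatStaircases (D : Diagram) (hD : IsSkewDiagram D)
    (hnot : ¬ IsSumOfFatStaircases D) (i l : ℕ)
    (hil : i ≤ l) (hfirst : i ≤ colLenAt D (leftCol D))
    (hlast : i ≤ colLenAt D (wd D - 1)) :
    ¬ IsSumOfFatStaircases (nearConcat i D (colD l)) ∧
    ¬ IsSumOfFatStaircases (nearConcat i (colD l) D) := by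
  classical
  obtain ⟨lam, mu, hmule, hDeq⟩ := hD
  have hex : ∃ d0, lrCount D d0 ≠ 0 ∧ ¬ IsFatStaircase d0 := by
    by_contra hcon
    push_neg at hcon
    exact hnot (fun d hd => hcon d hd)
  obtain ⟨d0, hne, hnfs⟩ := hex
  have hT0 : Nonempty {T : SSYT D // IsLattice T ∧ content T = d0} := (Nat.card_ne_zero.1 hne).1
  obtain ⟨⟨T0, hlat, hcont⟩⟩ := hT0
  have hdec : ∀ v, d0 (v + 1) ≤ d0 v := by
    intro v
    rw [← hcont]
    exact content_decreasing T0 hlat v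
  have hgap : ∃ k, d0 (k + 1) + 2 ≤ d0 k := by
    by_contra hcon
    push_neg at hcon
    apply hnfs
    obtain ⟨β, hβpos, _, hβ⟩ := fs_of_nogap (d0 0) d0 rfl hdec
      (fun k => by have := hcon k; omega)
    refine ⟨β, hβpos, ?_⟩
    apply Finsupp.ext
    intro k
    rw [hβ k, fatStaircase, rowContent_diagramOfRows]
  rcases Nat.eq_zero_or_pos l with rfl | hl
  · rw [nearConcat_colD_zero_left, nearConcat_colD_zero_right]
    exact ⟨hnot, hnot⟩
  · constructor
    · obtain ⟨T, hT, hC⟩ := part1 D hDeq T0 hlat i l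
      intro hsum
      exact not_fs_add d0 l hgap
        (hsum _ (lrCount_ne_zero_of T hT (by rw [hC, hcont])))
    · obtain ⟨T, hT, hC⟩ := part2 D hDeq T0 hlat i l hl hfirst
      intro hsum
      exact not_fs_add d0 l hgap
        (hsum _ (lrCount_ne_zero_of T hT (by rw [hC, hcont])))
end
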